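/- arXiv:2305.05637 — 6 statements merged into one kernel-verified Lean document; each statement's English description precedes it below -/
import Mathlib

section
/- Let U ⊆ (𝕋ⁿ)² be a set of signed pairs. The following are equivalent: (1) U is a signed bend cone and U is closed in the subspace of signed pairs of (𝕋ⁿ)²; (2) there exists a subset A ⊆ 𝕋ⁿ such that U = A°, the signed polar of A. (Characterization of signed polars of sets of nonnegative tropical vectors.) -/
/-- The tropical (max-plus) semiring 𝕋 = ℝ ∪ {−∞}, modeled as `WithBot ℝ`. -/
abbrev Trop : Type := WithBot ℝ

/-- The map 𝕋 → ℝ, x ↦ eˣ (with e^{−∞} = 0), inducing the metric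
d(x,y) = |eˣ − e^y| on 𝕋. -/
noncomputable def tropExp : Trop → ℝ := WithBot.recBotCoe (0 : ℝ) Real.exp

/-- The topology on 𝕋 induced by the metric d(x,y) = |eˣ − e^y|. -/
noncomputable instance : TopologicalSpace Trop :=
  TopologicalSpace.induced tropExp inferInstance

/-- A pair of vectors (x⁺, x⁻) ∈ (𝕋ⁿ)² is signed if, for every coordinate i,
x⁺_i = −∞ or x⁻_i = −∞. -/
def SignedVecPair {n : ℕ} (x : (Fin n → Trop) × (Fin n → Trop)) : Prop :=
  ∀ i, x.1 i = ⊥ ∨ x.2 i = ⊥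

/-- Tropical scalar product of vectors: ⟨x,y⟩ = max_i (x_i + y_i). -/
noncomputable def tdot {n : ℕ} (x y : Fin n → Trop) : Trop :=
  Finset.univ.sup fun i => x i + y i

/-- The "signed part" f^∨ of a pair of vectors f = (f⁺, f⁻):
f^{∨+}_i = f⁺_i if f⁺_i ≥ f⁻_i and −∞ otherwise;
f^{∨−}_i = f⁻_i if f⁻_i > f⁺_i and −∞ otherwise. -/
noncomputable def vee {n : ℕ} (f : (Fin n → Trop) × (Fin n → Trop)) :
    (Fin n → Trop) × (Fin n → Trop) :=
  (fun i => if f.2 i ≤ f.1 i then f.1 i else ⊥,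
   fun i => if f.1 i < f.2 i then f.2 i else ⊥)

/-- Tropical scalar action: (λ ⊙ f)_i = λ + f_i. -/
noncomputable def tsmul {n : ℕ} (l : Trop) (f : Fin n → Trop) : Fin n → Trop :=
  fun i => l + f i

/-- A monotone pre-congruence C ⊆ (𝕋ⁿ)²: stable by tropical scalar multiplication,
by componentwise max, by "transitivity" (f⁻ = g⁺ implies (f⁺,g⁻) ∈ C), and containing
every pair (f⁺,f⁻) with f⁺ ≥ f⁻. -/
structure IsMonotonePrecongruence {n : ℕ} (C : Set ((Fin n → Trop) × (Fin n → Trop))) : Prop where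
  smul_mem : ∀ f ∈ C, ∀ l : Trop, (tsmul l f.1, tsmul l f.2) ∈ C
  add_mem : ∀ f ∈ C, ∀ g ∈ C, (f.1 ⊔ g.1, f.2 ⊔ g.2) ∈ C
  trans_mem : ∀ f ∈ C, ∀ g ∈ C, f.2 = g.1 → (f.1, g.2) ∈ C
  monotone_mem : ∀ f : (Fin n → Trop) × (Fin n → Trop), f.2 ≤ f.1 → f ∈ C

/-- The pair x ⊕_i y = (x⁺ ⊕ y⁺_{∖i}, x⁻_{∖i} ⊕ y⁻), where z_{∖i} is z with
coordinate i replaced by −∞. -/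
noncomputable def oplusI {n : ℕ} (i : Fin n)
    (x y : (Fin n → Trop) × (Fin n → Trop)) : (Fin n → Trop) × (Fin n → Trop) :=
  (x.1 ⊔ Function.update y.1 i ⊥, Function.update x.2 i ⊥ ⊔ y.2)

/-- A signed bend cone R ⊆ (𝕋ⁿ)²: all elements are signed pairs, R contains all
pairs (x⁺, −∞), is stable by tropical scalar multiplication, and is stable under
the operations x, y ↦ (x ⊕ y)^∨ and x, y ↦ (x ⊕_i y)^∨ (the latter when x⁻_i = y⁺_i). -/
structure IsSignedBendCone {n : ℕ} (R : Set ((Fin n → Trop) × (Fin n → Trop))) : Prop where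
  signed : ∀ x ∈ R, SignedVecPair x
  pos_mem : ∀ xp : Fin n → Trop, (xp, fun _ => (⊥ : Trop)) ∈ R
  smul_mem : ∀ x ∈ R, ∀ l : Trop, (tsmul l x.1, tsmul l x.2) ∈ R
  add_vee_mem : ∀ x ∈ R, ∀ y ∈ R, vee (x.1 ⊔ y.1, x.2 ⊔ y.2) ∈ R
  addI_vee_mem : ∀ x ∈ R, ∀ y ∈ R, ∀ i : Fin n, x.2 i = y.1 i → vee (oplusI i x y) ∈ R

/-- The one-sided polar B^⊲ = {a ∈ 𝕋ⁿ : ⟨x⁺,a⟩ ≥ ⟨x⁻,a⟩ for all (x⁺,x⁻) ∈ B}. -/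
def onePolar {n : ℕ} (B : Set ((Fin n → Trop) × (Fin n → Trop))) : Set (Fin n → Trop) :=
  {a | ∀ x ∈ B, tdot x.2 a ≤ tdot x.1 a}

/-- The signed part C^∨ of a set C ⊆ (𝕋ⁿ)²: the signed pairs belonging to C. -/
def signedPart {n : ℕ} (C : Set ((Fin n → Trop) × (Fin n → Trop))) :
    Set ((Fin n → Trop) × (Fin n → Trop)) :=
  {x ∈ C | SignedVecPair x}

/-- The signed polar A° of A ⊆ 𝕋ⁿ : the set of signed pairs (x⁺,x⁻) with
⟨x⁺,a⟩ ≥ ⟨x⁻,a⟩ for all a ∈ A. -/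
def signedPolar {n : ℕ} (A : Set (Fin n → Trop)) :
    Set ((Fin n → Trop) × (Fin n → Trop)) :=
  {x | SignedVecPair x ∧ ∀ a ∈ A, tdot x.2 a ≤ tdot x.1 a}

open Topology Filter

@[simp] lemma tropExp_bot : tropExp ⊥ = 0 := rfl
@[simp] lemma tropExp_coe (r : ℝ) : tropExp ↑r = Real.exp r := rfl

lemma tropExp_nonneg (x : Trop) : 0 ≤ tropExp x := by
  induction x using WithBot.recBotCoe with
  | bot => simp
  | coe r => exact (Real.exp_pos r).le

noncomputable def tE (x : Trop) : NNReal := ⟨tropExp x, tropExp_nonneg x⟩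

@[simp] lemma tE_bot : tE ⊥ = 0 := rfl
@[simp] lemma coe_tE (x : Trop) : (tE x : ℝ) = tropExp x := rfl

lemma tE_strictMono : StrictMono tE := by
  intro a b hab
  induction b using WithBot.recBotCoe with
  | bot => exact absurd hab (by simp)
  | coe r =>
    induction a using WithBot.recBotCoe with
    | bot => rw [← NNReal.coe_lt_coe, coe_tE, coe_tE]; simpa using Real.exp_pos r
    | coe s =>
      simp only [tE, ← NNReal.coe_lt_coe, coe_tE, tropExp_coe]
      exact Real.exp_lt_exp.2 (by exact_mod_cast hab)

lemma tE_le_iff {a b : Trop} : tE a ≤ tE b ↔ a ≤ b := tE_strictMono.le_iff_le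
lemma tE_lt_iff {a b : Trop} : tE a < tE b ↔ a < b := tE_strictMono.lt_iff_lt

lemma tE_sup (a b : Trop) : tE (a ⊔ b) = tE a ⊔ tE b := tE_strictMono.monotone.map_sup a b

lemma tE_add (a b : Trop) : tE (a + b) = tE a * tE b := by
  induction a using WithBot.recBotCoe with
  | bot => simp
  | coe r =>
    induction b using WithBot.recBotCoe with
    | bot => rw [WithBot.add_bot, tE_bot, mul_zero]
    | coe s =>
      ext
      push_cast [tE, ← WithBot.coe_add]
      exact Real.exp_add r s

lemma continuous_tropExp : Continuous tropExp := continuous_induced_dom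
lemma continuous_tE : Continuous tE := continuous_tropExp.subtype_mk _

lemma isEmbedding_tropExp : Topology.IsEmbedding tropExp :=
  ⟨⟨rfl⟩, fun a b hab => tE_strictMono.injective (by ext; simpa using hab)⟩

instance : TopologicalSpace.MetrizableSpace Trop := isEmbedding_tropExp.metrizableSpace

lemma continuous_coe_trop : Continuous ((↑) : ℝ → Trop) := by
  rw [continuous_induced_rng]
  exact Real.continuous_exp

/-! ### tdot lemmas -/

section tdot
variable {n : ℕ}

lemma le_tdot (x a : Fin n → Trop) (i : Fin n) : x i + a i ≤ tdot x a := by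
  unfold tdot; exact Finset.le_sup (f := fun j => x j + a j) (Finset.mem_univ i)

lemma tdot_le {x a : Fin n → Trop} {t : Trop} (h : ∀ i, x i + a i ≤ t) : tdot x a ≤ t := by
  unfold tdot; exact Finset.sup_le fun i _ => h i

lemma tdot_mono_left {x y : Fin n → Trop} (h : x ≤ y) (a : Fin n → Trop) :
    tdot x a ≤ tdot y a :=
  tdot_le fun i => le_trans (add_le_add_left (h i) _) (le_tdot y a i)

lemma tdot_sup_left (x y a : Fin n → Trop) :
    tdot (x ⊔ y) a = tdot x a ⊔ tdot y a := by
  have h : (fun i => (x ⊔ y) i + a i) = (fun i => x i + a i) ⊔ (fun i => y i + a i) := by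
    funext i
    exact (max_add_add_right (x i) (y i) (a i)).symm
  rw [tdot, h, Finset.sup_sup]
  rfl

lemma tdot_bot (a : Fin n → Trop) : tdot (fun _ => (⊥ : Trop)) a = ⊥ := by
  simp [tdot]

lemma tdot_tsmul (l : Trop) (x a : Fin n → Trop) :
    tdot (tsmul l x) a = l + tdot x a := by
  rw [tdot, tdot, Finset.comp_sup_eq_sup_comp (l + ·)]
  · exact Finset.sup_congr rfl fun i _ => by simp [tsmul, Function.comp, add_assoc]
  · intro u v
    rcases le_total u v with h | h
    · simp [sup_eq_right.2 h, sup_eq_right.2 (add_le_add_right h l)]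
    · simp [sup_eq_left.2 h, sup_eq_left.2 (add_le_add_right h l)]
  · exact WithBot.add_bot l

lemma eq_bot_of_le_all {x : Trop} (h : ∀ r : ℝ, x ≤ ↑r) : x = ⊥ := by
  induction x using WithBot.recBotCoe with
  | bot => rfl
  | coe s => exact absurd (h (s - 1)) (by exact_mod_cast (by linarith : ¬ (s : ℝ) ≤ s - 1))

end tdot

/-! ### scalar vee operations -/

noncomputable def vp (a b : Trop) : Trop := if b ≤ a then a else ⊥
noncomputable def vm (a b : Trop) : Trop := if a < b then b else ⊥

lemma vee_eq {n : ℕ} (f : (Fin n → Trop) × (Fin n → Trop)) :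
    vee f = (fun i => vp (f.1 i) (f.2 i), fun i => vm (f.1 i) (f.2 i)) := rfl

lemma vp_of_le {a b : Trop} (h : b ≤ a) : vp a b = a := if_pos h
lemma vp_of_lt {a b : Trop} (h : a < b) : vp a b = ⊥ := if_neg (not_le.2 h)
lemma vm_of_le {a b : Trop} (h : b ≤ a) : vm a b = ⊥ := if_neg (not_lt.2 h)
lemma vm_of_lt {a b : Trop} (h : a < b) : vm a b = b := if_pos h

lemma vp_le (a b : Trop) : vp a b ≤ a := by
  unfold vp; split_ifs <;> simp

lemma vm_le (a b : Trop) : vm a b ≤ b := by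
  unfold vm; split_ifs <;> simp

lemma vp_or_vm_bot (a b : Trop) : vp a b = ⊥ ∨ vm a b = ⊥ := by
  rcases le_or_gt b a with h | h
  · right; exact vm_of_le h
  · left; exact vp_of_lt h

lemma vp_sup_vm (a b : Trop) : vp a b ⊔ vm a b = a ⊔ b := by
  rcases le_or_gt b a with h | h
  · rw [vp_of_le h, vm_of_le h, sup_eq_left.2 h, sup_bot_eq]
  · rw [vp_of_lt h, vm_of_lt h, sup_eq_right.2 h.le, bot_sup_eq]

@[simp] lemma vp_bot_right (a : Trop) : vp a ⊥ = a := vp_of_le bot_le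
@[simp] lemma vm_bot_right (a : Trop) : vm a ⊥ = ⊥ := vm_of_le bot_le
@[simp] lemma vp_bot_left (b : Trop) : vp ⊥ b = ⊥ := by
  unfold vp; split_ifs <;> rfl

/-- key scalar merge lemma behind `vee (vee f ⊔ vee g) = vee (f ⊔ g)` -/
lemma vp_merge (a b c d : Trop) :
    vp (vp a b ⊔ vp c d) (vm a b ⊔ vm c d) = vp (a ⊔ c) (b ⊔ d) := by
  rcases le_or_gt b a with h1 | h1 <;> rcases le_or_gt d c with h2 | h2
  · rw [vp_of_le h1, vm_of_le h1, vp_of_le h2, vm_of_le h2, sup_idem, vp_bot_right,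
      vp_of_le (sup_le_sup h1 h2)]
  · rw [vp_of_le h1, vm_of_le h1, vp_of_lt h2, vm_of_lt h2, sup_bot_eq, bot_sup_eq]
    rcases le_or_gt d a with h3 | h3
    · rw [vp_of_le h3, sup_eq_left.2 (h2.trans_le h3).le, vp_of_le (sup_le h1 h3)]
    · rw [vp_of_lt h3, sup_eq_right.2 (h1.trans h3.le), vp_of_lt (max_lt h3 h2)]
  · rw [vp_of_lt h1, vm_of_lt h1, vp_of_le h2, vm_of_le h2, bot_sup_eq, sup_bot_eq]
    rcases le_or_gt b c with h3 | h3
    · rw [vp_of_le h3, sup_eq_right.2 (h1.trans_le h3).le, vp_of_le (sup_le h3 h2)]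
    · rw [vp_of_lt h3, sup_eq_left.2 (h2.trans h3.le), vp_of_lt (max_lt h1 h3)]
  · rw [vp_of_lt h1, vm_of_lt h1, vp_of_lt h2, vm_of_lt h2, sup_idem, vp_bot_left,
      vp_of_lt (max_lt_max h1 h2)]

lemma vm_merge (a b c d : Trop) :
    vm (vp a b ⊔ vp c d) (vm a b ⊔ vm c d) = vm (a ⊔ c) (b ⊔ d) := by
  rcases le_or_gt b a with h1 | h1 <;> rcases le_or_gt d c with h2 | h2
  · rw [vp_of_le h1, vm_of_le h1, vp_of_le h2, vm_of_le h2, sup_idem, vm_bot_right,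
      vm_of_le (sup_le_sup h1 h2)]
  · rw [vp_of_le h1, vm_of_le h1, vp_of_lt h2, vm_of_lt h2, sup_bot_eq, bot_sup_eq]
    rcases le_or_gt d a with h3 | h3
    · rw [vm_of_le h3,
        vm_of_le (sup_le (h1.trans le_sup_left) (h3.trans le_sup_left))]
    · rw [vm_of_lt h3, sup_eq_right.2 (h1.trans h3.le), vm_of_lt (max_lt h3 h2)]
  · rw [vp_of_lt h1, vm_of_lt h1, vp_of_le h2, vm_of_le h2, bot_sup_eq, sup_bot_eq]
    rcases le_or_gt b c with h3 | h3
    · rw [vm_of_le h3,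
        vm_of_le (sup_le (h3.trans le_sup_right) (h2.trans le_sup_right))]
    · rw [vm_of_lt h3, sup_eq_left.2 (h2.trans h3.le), vm_of_lt (max_lt h1 h3)]
  · rw [vp_of_lt h1, vm_of_lt h1, vp_of_lt h2, vm_of_lt h2, sup_idem,
      vm_of_lt (lt_of_le_of_lt bot_le (lt_of_lt_of_le h1 le_sup_left)),
      vm_of_lt (max_lt_max h1 h2)]

@[simp] lemma vm_bot_left (b : Trop) : vm ⊥ b = b := by
  induction b using WithBot.recBotCoe with
  | bot => exact vm_of_le le_rfl
  | coe r => exact vm_of_lt (WithBot.bot_lt_coe r)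

/-! ### vector-level vee lemmas -/

section veevec
variable {n : ℕ}

lemma vee_signed (f : (Fin n → Trop) × (Fin n → Trop)) : SignedVecPair (vee f) :=
  fun i => vp_or_vm_bot _ _

lemma vee_of_signed {x : (Fin n → Trop) × (Fin n → Trop)} (h : SignedVecPair x) :
    vee x = x := by
  have h1 : (vee x).1 = x.1 := by
    funext i
    rcases h i with hb | hb
    · rw [vee_eq]; simp [hb]
    · rw [vee_eq]; simp [hb]
  have h2 : (vee x).2 = x.2 := by
    funext i
    rcases h i with hb | hb
    · rw [vee_eq]; simp [hb]
    · rw [vee_eq]; simp [hb]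
  exact Prod.ext h1 h2

lemma vee_sup_vee (f g : (Fin n → Trop) × (Fin n → Trop)) :
    vee ((vee f).1 ⊔ (vee g).1, (vee f).2 ⊔ (vee g).2) = vee (f.1 ⊔ g.1, f.2 ⊔ g.2) := by
  apply Prod.ext
  · funext i
    exact vp_merge (f.1 i) (f.2 i) (g.1 i) (g.2 i)
  · funext i
    exact vm_merge (f.1 i) (f.2 i) (g.1 i) (g.2 i)

lemma tdot_vee_fst_le (f : (Fin n → Trop) × (Fin n → Trop)) (a : Fin n → Trop) :
    tdot (vee f).1 a ≤ tdot f.1 a :=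
  tdot_mono_left (fun i => vp_le _ _) a

lemma tdot_vee_snd_le (f : (Fin n → Trop) × (Fin n → Trop)) (a : Fin n → Trop) :
    tdot (vee f).2 a ≤ tdot f.2 a :=
  tdot_mono_left (fun i => vm_le _ _) a

lemma vee_tdot {f : (Fin n → Trop) × (Fin n → Trop)} {a : Fin n → Trop}
    (h : tdot f.2 a ≤ tdot f.1 a) :
    tdot (vee f).2 a ≤ tdot (vee f).1 a := by
  by_contra hc
  push_neg at hc
  set t := tdot (vee f).2 a with ht_def
  have h1 : t ≤ tdot f.2 a := tdot_vee_snd_le f a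
  have hsup : (vee f).1 ⊔ (vee f).2 = f.1 ⊔ f.2 := by
    funext i
    exact vp_sup_vm (f.1 i) (f.2 i)
  have h2 : tdot f.1 a ≤ t := by
    calc tdot f.1 a ≤ tdot (f.1 ⊔ f.2) a := tdot_mono_left le_sup_left a
    _ = tdot (vee f).1 a ⊔ t := by rw [← hsup, tdot_sup_left]
    _ = t := sup_eq_right.2 hc.le
  have ht : tdot f.1 a = t := le_antisymm h2 ((h1.trans h))
  have htb : t ≠ ⊥ := fun hb => not_lt_bot (hb ▸ hc)
  rcases Finset.univ.eq_empty_or_nonempty (α := Fin n) with he | hne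
  · exact htb (by rw [← ht, tdot, he]; rfl)
  obtain ⟨i, -, hi⟩ := Finset.exists_mem_eq_sup Finset.univ hne (fun i => f.1 i + a i)
  have hi' : f.1 i + a i = t := by rw [← ht]; unfold tdot; exact hi.symm
  rcases le_or_gt (f.2 i) (f.1 i) with hle | hlt
  · have : t ≤ tdot (vee f).1 a := by
      rw [← hi']
      have : (vee f).1 i = f.1 i := vp_of_le hle
      exact this ▸ le_tdot (vee f).1 a i
    exact absurd (lt_of_lt_of_le hc this) (lt_irrefl _)
  · have hai : a i ≠ ⊥ := by
      intro hb
      exact htb (by rw [← hi', hb, WithBot.add_bot])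
    have : t < f.2 i + a i := by
      rw [← hi']
      exact WithBot.add_lt_add_right hai hlt
    have h3 : f.2 i + a i ≤ t := (le_tdot f.2 a i).trans (h.trans_eq ht)
    exact absurd (this.trans_le h3) (lt_irrefl _)

end veevec

/-! ### derived operations in a signed bend cone -/

section bend
variable {n : ℕ} {U : Set ((Fin n → Trop) × (Fin n → Trop))}

lemma signed_update_bot {w : (Fin n → Trop) × (Fin n → Trop)} (hsw : SignedVecPair w)
    (i : Fin n) : SignedVecPair (w.1, Function.update w.2 i ⊥) := by
  intro j
  by_cases hj : j = i
  · subst hj; right; simp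
  · simpa [Function.update_of_ne hj] using hsw j

lemma del_neg (hR : IsSignedBendCone U) {w : (Fin n → Trop) × (Fin n → Trop)}
    (hw : w ∈ U) (i : Fin n) : (w.1, Function.update w.2 i ⊥) ∈ U := by
  have hsw := hR.signed w hw
  have hy := hR.pos_mem (Function.update (fun _ : Fin n => (⊥ : Trop)) i (w.2 i))
  have h := hR.addI_vee_mem w hw _ hy i (by simp)
  have he : oplusI i w (Function.update (fun _ : Fin n => (⊥ : Trop)) i (w.2 i),
      fun _ => (⊥ : Trop)) = (w.1, Function.update w.2 i ⊥) := by
    apply Prod.ext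
    · show w.1 ⊔ Function.update (Function.update (fun _ : Fin n => (⊥ : Trop)) i (w.2 i)) i ⊥
        = w.1
      funext j
      by_cases hj : j = i <;> simp [hj]
    · show Function.update w.2 i ⊥ ⊔ (fun _ => (⊥ : Trop)) = Function.update w.2 i ⊥
      funext j
      simp
  rw [he, vee_of_signed (signed_update_bot hsw i)] at h
  exact h

lemma del_finset (hR : IsSignedBendCone U) {w : (Fin n → Trop) × (Fin n → Trop)}
    (hw : w ∈ U) (S : Finset (Fin n)) :
    (w.1, fun j => if j ∈ S then ⊥ else w.2 j) ∈ U := by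
  classical
  induction S using Finset.induction_on with
  | empty => simpa using hw
  | @insert i S hiS ih =>
    have h := del_neg hR ih i
    have he : Function.update (fun j => if j ∈ S then (⊥ : Trop) else w.2 j) i ⊥
        = fun j => if j ∈ insert i S then ⊥ else w.2 j := by
      funext j
      by_cases hj : j = i
      · subst hj; simp
      · simp [Function.update_of_ne hj, hj]
    rw [he] at h
    exact h

lemma weaken_pos (hR : IsSignedBendCone U) {w t : (Fin n → Trop) × (Fin n → Trop)}
    (hw : w ∈ U) (hts : SignedVecPair t) (h2 : w.2 = t.2) (h1 : w.1 ≤ t.1) : t ∈ U := by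
  have h := hR.add_vee_mem w hw _ (hR.pos_mem t.1)
  have he : (w.1 ⊔ t.1, w.2 ⊔ fun _ => (⊥ : Trop)) = (t.1, t.2) := by
    apply Prod.ext
    · exact sup_eq_right.2 h1
    · show w.2 ⊔ (fun _ => (⊥ : Trop)) = t.2
      funext j
      simp [h2]
  rw [he, vee_of_signed hts] at h
  exact h

lemma vee_fst_apply {n : ℕ} (f : (Fin n → Trop) × (Fin n → Trop)) (i : Fin n) :
    (vee f).1 i = vp (f.1 i) (f.2 i) := rfl
lemma vee_snd_apply {n : ℕ} (f : (Fin n → Trop) × (Fin n → Trop)) (i : Fin n) :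
    (vee f).2 i = vm (f.1 i) (f.2 i) := rfl

lemma bend_trans_step1 (hR : IsSignedBendCone U) (A H B : Fin n → Trop)
    (hx : vee (A, H) ∈ U) (hy : vee (H, B) ∈ U)
    (hbad : ∀ i, i ∈ bad → (A i < H i ∧ B i ≤ H i)) :
    ∀ S : Finset (Fin n), S ⊆ bad →
      ((fun j => if j ∈ S then ⊥ else vp (A j ⊔ H j) (H j ⊔ B j)),
       (fun j => if j ∈ S then ⊥ else vm (A j ⊔ H j) (H j ⊔ B j))) ∈ U := by
  classical
  intro S
  induction S using Finset.induction_on with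
  | empty =>
    intro _
    have h := hR.add_vee_mem _ hx _ hy
    rw [vee_sup_vee (A, H) (H, B)] at h
    have he : vee ((A, H).1 ⊔ (H, B).1, (A, H).2 ⊔ (H, B).2)
        = ((fun j => if j ∈ (∅ : Finset (Fin n)) then ⊥ else vp (A j ⊔ H j) (H j ⊔ B j)),
           (fun j => if j ∈ (∅ : Finset (Fin n)) then ⊥ else vm (A j ⊔ H j) (H j ⊔ B j))) := by
      apply Prod.ext <;> funext j <;>
        simp only [vee_fst_apply, vee_snd_apply, Pi.sup_apply, Finset.notMem_empty,
          if_false] <;> rfl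
    rw [he] at h
    exact h
  | @insert i S hiS ih =>
    intro hsub
    have hibad := hbad i (hsub (Finset.mem_insert_self i S))
    have hSbad : S ⊆ bad := fun j hj => hsub (Finset.mem_insert_of_mem hj)
    have hwS := ih hSbad
    have hxS := del_finset hR hx S
    have hcond : (fun j => if j ∈ S then (⊥:Trop) else (vee (A, H)).2 j) i
        = (fun j => if j ∈ S then (⊥:Trop) else vp (A j ⊔ H j) (H j ⊔ B j)) i := by
      simp only [if_neg hiS]
      rw [vee_snd_apply, vm_of_lt hibad.1, sup_eq_right.2 hibad.1.le, sup_eq_left.2 hibad.2,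
        vp_of_le le_rfl]
    have h := hR.addI_vee_mem _ hxS _ hwS i hcond
    set pre := oplusI i ((vee (A, H)).1, fun j => if j ∈ S then ⊥ else (vee (A, H)).2 j)
        ((fun j => if j ∈ S then ⊥ else vp (A j ⊔ H j) (H j ⊔ B j)),
         (fun j => if j ∈ S then ⊥ else vm (A j ⊔ H j) (H j ⊔ B j))) with hpre
    have hpre1 : ∀ j, pre.1 j
        = vp (A j) (H j) ⊔ (if j = i ∨ j ∈ S then ⊥ else vp (A j ⊔ H j) (H j ⊔ B j)) := by
      intro j
      rw [hpre]
      show (vee (A, H)).1 j ⊔ Function.update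
          (fun j => if j ∈ S then ⊥ else vp (A j ⊔ H j) (H j ⊔ B j)) i ⊥ j = _
      rw [vee_fst_apply]
      by_cases hji : j = i
      · subst hji; rw [Function.update_self, if_pos (Or.inl rfl)]
      · rw [Function.update_of_ne hji]
        by_cases hjS : j ∈ S
        · rw [if_pos hjS, if_pos (Or.inr hjS)]
        · rw [if_neg hjS, if_neg (not_or.mpr ⟨hji, hjS⟩)]
    have hpre2 : ∀ j, pre.2 j
        = (if j = i ∨ j ∈ S then ⊥ else vm (A j) (H j))
          ⊔ (if j ∈ S then ⊥ else vm (A j ⊔ H j) (H j ⊔ B j)) := by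
      intro j
      rw [hpre]
      show Function.update (fun j => if j ∈ S then ⊥ else (vee (A, H)).2 j) i ⊥ j ⊔ _ = _
      by_cases hji : j = i
      · subst hji; rw [Function.update_self, if_pos (Or.inl rfl)]
      · rw [Function.update_of_ne hji]
        by_cases hjS : j ∈ S
        · rw [if_pos hjS, if_pos (Or.inr hjS)]
        · rw [if_neg hjS, if_neg (not_or.mpr ⟨hji, hjS⟩), vee_snd_apply]
    have he : vee pre =
        ((fun j => if j ∈ insert i S then ⊥ else vp (A j ⊔ H j) (H j ⊔ B j)),
         (fun j => if j ∈ insert i S then ⊥ else vm (A j ⊔ H j) (H j ⊔ B j))) := by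
      apply Prod.ext <;> funext j <;>
        simp only [vee_fst_apply, vee_snd_apply, Finset.mem_insert] <;>
        rw [hpre1 j, hpre2 j]
      · by_cases hji : j = i
        · subst hji
          simp only [eq_self_iff_true, true_or, if_true]
          rw [vp_of_lt hibad.1, sup_idem, bot_sup_eq, vp_bot_left]
        · by_cases hjS : j ∈ S
          · have hjbad := hbad j (hSbad hjS)
            simp only [hjS, or_true, if_true]
            rw [vp_of_lt hjbad.1, sup_idem, vp_bot_left]
          · simp only [hji, hjS, false_or, if_false]
            rw [vp_merge, sup_left_idem, sup_left_idem]
      · by_cases hji : j = i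
        · subst hji
          simp only [eq_self_iff_true, true_or, if_true, if_neg hiS]
          rw [vp_of_lt hibad.1, sup_idem, bot_sup_eq, sup_eq_right.2 hibad.1.le,
            sup_eq_left.2 hibad.2, vm_of_le le_rfl, vm_bot_right]
        · by_cases hjS : j ∈ S
          · have hjbad := hbad j (hSbad hjS)
            simp only [hjS, or_true, if_true]
            rw [vp_of_lt hjbad.1, sup_idem, vm_bot_right]
          · simp only [hji, hjS, false_or, if_false]
            rw [vm_merge, sup_left_idem, sup_left_idem]
    rw [he] at h
    exact h

/-- scalar reduction at non-bad coordinates -/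
lemma vp_vm_reduce {a h b : Trop} (hc : ¬(a < h ∧ b ≤ h)) :
    vp (a ⊔ h) (h ⊔ b) = vp a b ∧ vm (a ⊔ h) (h ⊔ b) = vm a b := by
  rcases le_or_gt h a with h1 | h1
  · rw [sup_eq_left.2 h1]
    rcases le_or_gt b a with h2 | h2
    · have hba : h ⊔ b ≤ a := sup_le h1 h2
      rw [vp_of_le hba, vp_of_le h2, vm_of_le hba, vm_of_le h2]
      exact ⟨rfl, rfl⟩
    · rw [sup_eq_right.2 (h1.trans h2.le)]
      exact ⟨rfl, rfl⟩
  · have h2 : h < b := lt_of_not_ge fun hb => hc ⟨h1, hb⟩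
    rw [sup_eq_right.2 h1.le, sup_eq_right.2 h2.le, vp_of_lt h2, vp_of_lt (h1.trans h2),
      vm_of_lt h2, vm_of_lt (h1.trans h2)]
    exact ⟨rfl, rfl⟩

lemma bend_trans (hR : IsSignedBendCone U) (A H B : Fin n → Trop)
    (hx : vee (A, H) ∈ U) (hy : vee (H, B) ∈ U) : vee (A, B) ∈ U := by
  classical
  set bad : Finset (Fin n) := Finset.univ.filter (fun i => A i < H i ∧ B i ≤ H i) with hbaddef
  have hbad : ∀ i, i ∈ bad → (A i < H i ∧ B i ≤ H i) := fun i hi => by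
    simpa [hbaddef] using hi
  have hwbad := bend_trans_step1 hR A H B hx hy hbad bad le_rfl
  set lam : Fin n → ℝ := fun j => WithBot.unbotD 0 (B j) - WithBot.unbotD 0 (H j) with hlam
  set bad2 : Finset (Fin n) := bad.filter (fun j => A j < B j) with hbad2def
  have hbad2 : ∀ j, j ∈ bad2 → (A j < H j ∧ B j ≤ H j) ∧ A j < B j := fun j hj => by
    rw [hbad2def, Finset.mem_filter] at hj
    exact ⟨hbad j hj.1, hj.2⟩
  have hbad2bad : bad2 ⊆ bad := by rw [hbad2def]; exact Finset.filter_subset _ _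
  -- the auxiliary scaled elements
  have hxj : ∀ j ∈ bad2,
      ((tsmul ↑(lam j) (vee (A, H)).1), fun k => if k = j then B j else ⊥) ∈ U := by
    intro j hj
    obtain ⟨⟨hAH, hBH⟩, hAB⟩ := hbad2 j hj
    obtain ⟨h, hH⟩ := WithBot.ne_bot_iff_exists.1 (ne_bot_of_gt hAH)
    obtain ⟨b, hB⟩ := WithBot.ne_bot_iff_exists.1 (ne_bot_of_gt hAB)
    have hs := hR.smul_mem _ hx (↑(lam j))
    have hd := del_finset hR hs (Finset.univ.erase j)
    have he2 : (fun k => if k ∈ Finset.univ.erase j then (⊥ : Trop)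
          else (tsmul (↑(lam j)) (vee (A, H)).2) k)
        = fun k => if k = j then B j else ⊥ := by
      funext k
      show (if k ∈ Finset.univ.erase j then (⊥ : Trop)
          else (tsmul (↑(lam j)) (vee (A, H)).2) k) = if k = j then B j else ⊥
      by_cases hkj : k = j
      · rw [if_neg (by simp [hkj]), if_pos hkj]
        show (↑(lam j) : Trop) + (vee (A, H)).2 k = B j
        have hlamk : lam j = b - h := by
          rw [hlam]
          simp only [← hH, ← hB, WithBot.unbotD_coe]
        rw [hkj, vee_snd_apply, vm_of_lt hAH, hlamk, ← hH, ← WithBot.coe_add,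
          sub_add_cancel, hB]
      · rw [if_pos (by simp [hkj]), if_neg hkj]
    rw [he2] at hd
    exact hd
  -- the second induction
  have step2 : ∀ S : Finset (Fin n), S ⊆ bad2 →
      vee ((fun k => (if k ∈ bad then ⊥ else vp (A k ⊔ H k) (H k ⊔ B k))
              ⊔ S.sup (fun j => ↑(lam j) + (vee (A, H)).1 k)),
           (fun k => (if k ∈ bad then ⊥ else vm (A k ⊔ H k) (H k ⊔ B k))
              ⊔ (if k ∈ S then B k else ⊥))) ∈ U := by
    intro S
    induction S using Finset.induction_on with
    | empty =>
      intro _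
      have hsigned : SignedVecPair
          ((fun k => if k ∈ bad then ⊥ else vp (A k ⊔ H k) (H k ⊔ B k)),
           (fun k => if k ∈ bad then ⊥ else vm (A k ⊔ H k) (H k ⊔ B k))) := by
        intro k
        by_cases hk : k ∈ bad
        · left; simp [hk]
        · simpa [hk] using vp_or_vm_bot (A k ⊔ H k) (H k ⊔ B k)
      have he : ((fun k => (if k ∈ bad then (⊥:Trop) else vp (A k ⊔ H k) (H k ⊔ B k))
              ⊔ (∅ : Finset (Fin n)).sup (fun j => ↑(lam j) + (vee (A, H)).1 k)),
           (fun k => (if k ∈ bad then (⊥:Trop) else vm (A k ⊔ H k) (H k ⊔ B k))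
              ⊔ (if k ∈ (∅ : Finset (Fin n)) then B k else ⊥)))
          = ((fun k => if k ∈ bad then ⊥ else vp (A k ⊔ H k) (H k ⊔ B k)),
             (fun k => if k ∈ bad then ⊥ else vm (A k ⊔ H k) (H k ⊔ B k))) := by
        apply Prod.ext <;> funext k <;> simp
      rw [he, vee_of_signed hsigned]
      exact hwbad
    | @insert j S hjS ih =>
      intro hsub
      have hSsub : S ⊆ bad2 := fun k hk => hsub (Finset.mem_insert_of_mem hk)
      have hjbad2 := hsub (Finset.mem_insert_self j S)
      have hxjU := hxj j hjbad2
      have hxjsigned : SignedVecPair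
          ((tsmul ↑(lam j) (vee (A, H)).1), fun k => if k = j then B j else ⊥) := by
        intro k
        by_cases hkj : k = j
        · left
          show (↑(lam j) : Trop) + (vee (A, H)).1 k = ⊥
          rw [hkj, vee_fst_apply, vp_of_lt ((hbad2 j hjbad2).1).1, WithBot.add_bot]
        · right; simp [hkj]
      have h := hR.add_vee_mem _ (ih hSsub) _ hxjU
      rw [show ((tsmul ↑(lam j) (vee (A, H)).1), fun k => if k = j then B j else ⊥)
            = vee ((tsmul ↑(lam j) (vee (A, H)).1), fun k => if k = j then B j else ⊥) from
          (vee_of_signed hxjsigned).symm, vee_sup_vee] at h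
      have he : ((fun k => (if k ∈ bad then (⊥:Trop) else vp (A k ⊔ H k) (H k ⊔ B k))
              ⊔ S.sup (fun j => ↑(lam j) + (vee (A, H)).1 k)) ⊔ tsmul ↑(lam j) (vee (A, H)).1,
           (fun k => (if k ∈ bad then (⊥:Trop) else vm (A k ⊔ H k) (H k ⊔ B k))
              ⊔ (if k ∈ S then B k else ⊥)) ⊔ (fun k => if k = j then B j else ⊥))
          = ((fun k => (if k ∈ bad then ⊥ else vp (A k ⊔ H k) (H k ⊔ B k))
              ⊔ (insert j S).sup (fun j => ↑(lam j) + (vee (A, H)).1 k)),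
             (fun k => (if k ∈ bad then ⊥ else vm (A k ⊔ H k) (H k ⊔ B k))
              ⊔ (if k ∈ insert j S then B k else ⊥))) := by
        apply Prod.ext <;> funext k
        · show ((if k ∈ bad then (⊥:Trop) else vp (A k ⊔ H k) (H k ⊔ B k))
              ⊔ S.sup (fun j => ↑(lam j) + (vee (A, H)).1 k)) ⊔ (↑(lam j) + (vee (A, H)).1 k)
            = (if k ∈ bad then (⊥:Trop) else vp (A k ⊔ H k) (H k ⊔ B k))
              ⊔ (insert j S).sup (fun j => ↑(lam j) + (vee (A, H)).1 k)
          rw [Finset.sup_insert, ← sup_assoc, sup_right_comm]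
        · show ((if k ∈ bad then (⊥:Trop) else vm (A k ⊔ H k) (H k ⊔ B k))
              ⊔ (if k ∈ S then B k else ⊥)) ⊔ (if k = j then B j else ⊥)
            = (if k ∈ bad then (⊥:Trop) else vm (A k ⊔ H k) (H k ⊔ B k))
              ⊔ (if k ∈ insert j S then B k else ⊥)
          by_cases hkj : k = j
          · rw [hkj, if_pos rfl, if_neg hjS, if_pos (Finset.mem_insert_self j S), sup_bot_eq]
          · rw [if_neg hkj, sup_bot_eq]
            simp only [Finset.mem_insert]
            by_cases hkS : k ∈ S
            · rw [if_pos hkS, if_pos (Or.inr hkS)]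
            · rw [if_neg hkS, if_neg (not_or.mpr ⟨hkj, hkS⟩)]
      rw [he] at h
      exact h
  -- final weakening
  have hfin := step2 bad2 le_rfl
  have hsuple : ∀ k, bad2.sup (fun j => ↑(lam j) + (vee (A, H)).1 k) ≤ A k := by
    intro k
    apply Finset.sup_le
    intro j hj
    obtain ⟨⟨hAH, hBH⟩, hAB⟩ := hbad2 j hj
    obtain ⟨h, hH⟩ := WithBot.ne_bot_iff_exists.1 (ne_bot_of_gt hAH)
    obtain ⟨b, hB⟩ := WithBot.ne_bot_iff_exists.1 (ne_bot_of_gt hAB)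
    have hlamk : lam j = b - h := by
      rw [hlam]
      simp only [← hH, ← hB, WithBot.unbotD_coe]
    have hlamneg : (↑(lam j) : Trop) ≤ ↑(0:ℝ) := by
      rw [hlamk]
      exact_mod_cast sub_nonpos.2 (by exact_mod_cast hB ▸ hH ▸ hBH)
    calc (↑(lam j) : Trop) + (vee (A, H)).1 k ≤ ↑(0:ℝ) + A k :=
          add_le_add hlamneg (vp_le _ _)
      _ = A k := by rw [WithBot.coe_zero, zero_add]
  apply weaken_pos hR hfin (vee_signed _)
  · -- second components equal
    funext k
    show vm ((if k ∈ bad then (⊥:Trop) else vp (A k ⊔ H k) (H k ⊔ B k))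
          ⊔ bad2.sup (fun j => ↑(lam j) + (vee (A, H)).1 k))
        ((if k ∈ bad then (⊥:Trop) else vm (A k ⊔ H k) (H k ⊔ B k))
          ⊔ (if k ∈ bad2 then B k else ⊥)) = vm (A k) (B k)
    by_cases hk : k ∈ bad
    · rw [if_pos hk, if_pos hk, bot_sup_eq]
      by_cases hk2 : k ∈ bad2
      · have hAB := (hbad2 k hk2).2
        rw [if_pos hk2, bot_sup_eq, vm_of_lt ((hsuple k).trans_lt hAB), vm_of_lt hAB]
      · have hBA : B k ≤ A k := by
          by_contra hc
          exact hk2 (by rw [hbad2def, Finset.mem_filter]; exact ⟨hk, lt_of_not_ge hc⟩)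
        rw [if_neg hk2, bot_sup_eq, vm_bot_right, vm_of_le hBA]
    · have hk2 : k ∉ bad2 := fun hc => hk (hbad2bad hc)
      have hred := vp_vm_reduce (a := A k) (h := H k) (b := B k)
        (fun hc => hk (by rw [hbaddef]; simp [hc.1, hc.2]))
      rw [if_neg hk, if_neg hk, if_neg hk2, sup_bot_eq, hred.1, hred.2]
      rcases le_or_gt (B k) (A k) with hBA | hAB
      · rw [vp_of_le hBA, vm_of_le hBA, sup_eq_left.2 (hsuple k), vm_bot_right]
      · rw [vp_of_lt hAB, vm_of_lt hAB, bot_sup_eq,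
          vm_of_lt ((hsuple k).trans_lt hAB)]
  · -- first components ≤
    intro k
    show vp ((if k ∈ bad then (⊥:Trop) else vp (A k ⊔ H k) (H k ⊔ B k))
          ⊔ bad2.sup (fun j => ↑(lam j) + (vee (A, H)).1 k))
        ((if k ∈ bad then (⊥:Trop) else vm (A k ⊔ H k) (H k ⊔ B k))
          ⊔ (if k ∈ bad2 then B k else ⊥)) ≤ vp (A k) (B k)
    by_cases hk : k ∈ bad
    · rw [if_pos hk, if_pos hk, bot_sup_eq]
      by_cases hk2 : k ∈ bad2
      · have hAB := (hbad2 k hk2).2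
        rw [if_pos hk2, bot_sup_eq, vp_of_lt ((hsuple k).trans_lt hAB)]
        exact bot_le
      · have hBA : B k ≤ A k := by
          by_contra hc
          exact hk2 (by rw [hbad2def, Finset.mem_filter]; exact ⟨hk, lt_of_not_ge hc⟩)
        rw [if_neg hk2, bot_sup_eq, vp_bot_right, vp_of_le hBA]
        exact hsuple k
    · have hk2 : k ∉ bad2 := fun hc => hk (hbad2bad hc)
      have hred := vp_vm_reduce (a := A k) (h := H k) (b := B k)
        (fun hc => hk (by rw [hbaddef]; simp [hc.1, hc.2]))
      rw [if_neg hk, if_neg hk, if_neg hk2, sup_bot_eq, hred.1, hred.2]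
      rcases le_or_gt (B k) (A k) with hBA | hAB
      · rw [vp_of_le hBA, vm_of_le hBA, sup_eq_left.2 (hsuple k), vp_bot_right]
      · rw [vp_of_lt hAB, vm_of_lt hAB, bot_sup_eq,
          vp_of_lt ((hsuple k).trans_lt hAB)]

/-! ### smul commutes with vee -/

lemma vp_tsmul (l a b : Trop) : vp (l + a) (l + b) = l + vp a b := by
  induction l using WithBot.recBotCoe with
  | bot => simp [vp]
  | coe r =>
    rcases le_or_gt b a with h | h
    · rw [vp_of_le h, vp_of_le (add_le_add_right h _)]
    · rw [vp_of_lt h, vp_of_lt (WithBot.add_lt_add_left (WithBot.coe_ne_bot) h),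
        WithBot.add_bot]

lemma vm_tsmul (l a b : Trop) : vm (l + a) (l + b) = l + vm a b := by
  induction l using WithBot.recBotCoe with
  | bot => simp [vm]
  | coe r =>
    rcases le_or_gt b a with h | h
    · rw [vm_of_le h, vm_of_le (add_le_add_right h _), WithBot.add_bot]
    · rw [vm_of_lt h, vm_of_lt (WithBot.add_lt_add_left (WithBot.coe_ne_bot) h)]

/-- `{f | vee f ∈ U}` is a monotone precongruence when `U` is a signed bend cone. -/
lemma C0_precong (hR : IsSignedBendCone U) :
    IsMonotonePrecongruence {f : (Fin n → Trop) × (Fin n → Trop) | vee f ∈ U} where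
  smul_mem := by
    intro f hf l
    show vee (tsmul l f.1, tsmul l f.2) ∈ U
    have h := hR.smul_mem _ hf l
    have he : (tsmul l (vee f).1, tsmul l (vee f).2) = vee (tsmul l f.1, tsmul l f.2) := by
      apply Prod.ext
      · funext i
        exact (vp_tsmul l (f.1 i) (f.2 i)).symm
      · funext i
        exact (vm_tsmul l (f.1 i) (f.2 i)).symm
    rw [he] at h
    exact h
  add_mem := by
    intro f hf g hg
    show vee (f.1 ⊔ g.1, f.2 ⊔ g.2) ∈ U
    have h := hR.add_vee_mem _ hf _ hg
    rw [vee_sup_vee] at h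
    exact h
  trans_mem := by
    intro f hf g hg hfg
    show vee (f.1, g.2) ∈ U
    exact bend_trans hR f.1 f.2 g.2 hf (by rw [hfg]; exact hg)
  monotone_mem := by
    intro f hle
    show vee f ∈ U
    have he : vee f = (f.1, fun _ => ⊥) := by
      apply Prod.ext
      · funext i
        exact vp_of_le (hle i)
      · funext i
        exact vm_of_le (hle i)
    rw [he]
    exact hR.pos_mem f.1

/-- `{f | vee f ∈ U}` is closed when `U` is closed in the subspace of signed pairs. -/
lemma C0_closed (hR : IsSignedBendCone U)
    (hcl : IsClosed ((Subtype.val :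
        {x : (Fin n → Trop) × (Fin n → Trop) // SignedVecPair x} →
          (Fin n → Trop) × (Fin n → Trop)) ⁻¹' U)) :
    IsClosed {f : (Fin n → Trop) × (Fin n → Trop) | vee f ∈ U} := by
  classical
  apply IsSeqClosed.isClosed
  intro x F hx hlim
  let pat : ℕ → (Fin n → Bool) := fun k i => decide ((x k).2 i ≤ (x k).1 i)
  obtain ⟨b, hbinf⟩ := Finite.exists_infinite_fiber pat
  haveI : Infinite (pat ⁻¹' {b} : Set ℕ) := hbinf
  let φ := Nat.orderEmbeddingOfSet (pat ⁻¹' {b})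
  have hφmem : ∀ k, pat (φ k) = b := by
    intro k
    have hmem : φ k ∈ pat ⁻¹' {b} := by
      have : φ k ∈ Set.range (Nat.orderEmbeddingOfSet (pat ⁻¹' {b})) := Set.mem_range_self k
      rwa [Nat.orderEmbeddingOfSet_range] at this
    exact hmem
  have hpat : ∀ k i, decide ((x (φ k)).2 i ≤ (x (φ k)).1 i) = b i := by
    intro k i
    have := hφmem k
    exact congrFun this i
  have hlim' : Tendsto (fun k => x (φ k)) atTop (𝓝 F) :=
    hlim.comp (Nat.orderEmbeddingOfSet (pat ⁻¹' {b})).strictMono.tendsto_atTop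
  have h1 : ∀ i, Tendsto (fun k => (x (φ k)).1 i) atTop (𝓝 (F.1 i)) := fun i =>
    (((continuous_apply i).comp continuous_fst).tendsto F).comp hlim'
  have h2 : ∀ i, Tendsto (fun k => (x (φ k)).2 i) atTop (𝓝 (F.2 i)) := fun i =>
    (((continuous_apply i).comp continuous_snd).tendsto F).comp hlim'
  set g : (Fin n → Trop) × (Fin n → Trop) :=
    ((fun i => if b i then F.1 i else ⊥), (fun i => if b i then ⊥ else F.2 i)) with hgdef
  have hgsigned : SignedVecPair g := by
    intro i
    by_cases hbi : b i
    · right; simp [hgdef, hbi]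
    · left; simp [hgdef, hbi]
  have hgk_eq : ∀ k, vee (x (φ k)) =
      ((fun i => if b i then (x (φ k)).1 i else ⊥),
       (fun i => if b i then ⊥ else (x (φ k)).2 i)) := by
    intro k
    apply Prod.ext
    · funext i
      show vp ((x (φ k)).1 i) ((x (φ k)).2 i) = if b i then (x (φ k)).1 i else ⊥
      by_cases hbi : b i
      · rw [if_pos hbi, vp_of_le (of_decide_eq_true ((hpat k i).trans (by rw [hbi])))]
      · rw [if_neg hbi,
          vp_of_lt (lt_of_not_ge (of_decide_eq_false ((hpat k i).trans (by
            rw [Bool.eq_false_iff] at *; simp [hbi]))))]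
    · funext i
      show vm ((x (φ k)).1 i) ((x (φ k)).2 i) = if b i then ⊥ else (x (φ k)).2 i
      by_cases hbi : b i
      · rw [if_pos hbi, vm_of_le (of_decide_eq_true ((hpat k i).trans (by rw [hbi])))]
      · rw [if_neg hbi,
          vm_of_lt (lt_of_not_ge (of_decide_eq_false ((hpat k i).trans (by
            rw [Bool.eq_false_iff] at *; simp [hbi]))))]
  have hglim : Tendsto (fun k => vee (x (φ k))) atTop (𝓝 g) := by
    have he : (fun k => vee (x (φ k))) = fun k =>
        ((fun i => if b i then (x (φ k)).1 i else ⊥),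
         (fun i => if b i then ⊥ else (x (φ k)).2 i)) := funext hgk_eq
    rw [he]
    apply Filter.Tendsto.prodMk_nhds
    · rw [tendsto_pi_nhds]
      intro i
      by_cases hbi : b i
      · simpa [hgdef, hbi] using h1 i
      · simpa [hgdef, hbi] using tendsto_const_nhds
    · rw [tendsto_pi_nhds]
      intro i
      by_cases hbi : b i
      · simpa [hgdef, hbi] using tendsto_const_nhds
      · simpa [hgdef, hbi] using h2 i
  have hgU : g ∈ U := by
    have hseq : Tendsto (fun k => (⟨vee (x (φ k)), vee_signed _⟩ :
        {y : (Fin n → Trop) × (Fin n → Trop) // SignedVecPair y})) atTop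
        (𝓝 ⟨g, hgsigned⟩) := by
      rw [tendsto_subtype_rng]
      exact hglim
    exact hcl.isSeqClosed (fun k => hx (φ k)) hseq
  have hble : ∀ i, b i = true → F.2 i ≤ F.1 i := by
    intro i hbi
    have hk : ∀ k, (x (φ k)).2 i ≤ (x (φ k)).1 i := fun k =>
      of_decide_eq_true ((hpat k i).trans hbi)
    refine tE_le_iff.1 (le_of_tendsto_of_tendsto'
      ((continuous_tE.tendsto _).comp (h2 i)) ((continuous_tE.tendsto _).comp (h1 i))
      (fun k => tE_le_iff.2 (hk k)))
  have hblt : ∀ i, b i = false → F.1 i ≤ F.2 i := by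
    intro i hbi
    have hk : ∀ k, (x (φ k)).1 i ≤ (x (φ k)).2 i := fun k =>
      (lt_of_not_ge (of_decide_eq_false ((hpat k i).trans hbi))).le
    refine tE_le_iff.1 (le_of_tendsto_of_tendsto'
      ((continuous_tE.tendsto _).comp (h1 i)) ((continuous_tE.tendsto _).comp (h2 i))
      (fun k => tE_le_iff.2 (hk k)))
  -- flip the tie coordinates
  set w : Fin n → Trop := fun i => if (b i = false ∧ F.1 i = F.2 i) then F.2 i else ⊥
    with hwdef
  have h := hR.add_vee_mem _ hgU _ (hR.pos_mem w)
  have he : vee (g.1 ⊔ w, g.2 ⊔ fun _ => ⊥) = vee F := by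
    apply Prod.ext
    · funext i
      show vp (g.1 i ⊔ w i) (g.2 i ⊔ ⊥) = vp (F.1 i) (F.2 i)
      rw [sup_bot_eq]
      by_cases hbi : b i
      · have hwi : w i = ⊥ := by simp [hwdef, hbi]
        have hg1 : g.1 i = F.1 i := by simp [hgdef, hbi]
        have hg2 : g.2 i = ⊥ := by simp [hgdef, hbi]
        rw [hwi, hg1, hg2, sup_bot_eq, vp_bot_right, vp_of_le (hble i (by simp [hbi]))]
      · have hbi' : b i = false := by simp [hbi]
        have hg1 : g.1 i = ⊥ := by simp [hgdef, hbi]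
        have hg2 : g.2 i = F.2 i := by simp [hgdef, hbi]
        have hle := hblt i hbi'
        by_cases htie : F.1 i = F.2 i
        · have hwi : w i = F.2 i := by simp [hwdef, hbi', htie]
          rw [hwi, hg1, hg2, bot_sup_eq, vp_of_le le_rfl, vp_of_le htie.ge, htie]
        · have hwi : w i = ⊥ := by simp [hwdef, htie]
          have hlt := lt_of_le_of_ne hle htie
          rw [hwi, hg1, hg2, sup_bot_eq, vp_bot_left, vp_of_lt hlt]
    · funext i
      show vm (g.1 i ⊔ w i) (g.2 i ⊔ ⊥) = vm (F.1 i) (F.2 i)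
      rw [sup_bot_eq]
      by_cases hbi : b i
      · have hwi : w i = ⊥ := by simp [hwdef, hbi]
        have hg1 : g.1 i = F.1 i := by simp [hgdef, hbi]
        have hg2 : g.2 i = ⊥ := by simp [hgdef, hbi]
        rw [hwi, hg1, hg2, sup_bot_eq, vm_bot_right, vm_of_le (hble i (by simp [hbi]))]
      · have hbi' : b i = false := by simp [hbi]
        have hg1 : g.1 i = ⊥ := by simp [hgdef, hbi]
        have hg2 : g.2 i = F.2 i := by simp [hgdef, hbi]
        have hle := hblt i hbi'
        by_cases htie : F.1 i = F.2 i
        · have hwi : w i = F.2 i := by simp [hwdef, hbi', htie]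
          rw [hwi, hg1, hg2, bot_sup_eq, vm_of_le le_rfl, vm_of_le htie.ge]
        · have hwi : w i = ⊥ := by simp [hwdef, htie]
          have hlt := lt_of_le_of_ne hle htie
          rw [hwi, hg1, hg2, sup_bot_eq, vm_bot_left, vm_of_lt hlt]
  rw [he] at h
  exact h

end bend

/-! ### separation for closed monotone precongruences -/

lemma trop_addneg_le_iff {x : Trop} {c μ : ℝ} : x + ↑(-c) ≤ ↑μ ↔ x ≤ ↑(μ + c) := by
  induction x using WithBot.recBotCoe with
  | bot => simp
  | coe s =>
    rw [← WithBot.coe_add, WithBot.coe_le_coe, WithBot.coe_le_coe]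
    constructor <;> intro h <;> linarith

lemma trop_negadd_le_iff {x : Trop} {c μ : ℝ} : (↑(-μ) : Trop) + x ≤ ↑c ↔ x ≤ ↑(μ + c) := by
  induction x using WithBot.recBotCoe with
  | bot => simp
  | coe s =>
    rw [← WithBot.coe_add, WithBot.coe_le_coe, WithBot.coe_le_coe]
    constructor <;> intro h <;> linarith

section separation
variable {n : ℕ} {C : Set ((Fin n → Trop) × (Fin n → Trop))}

lemma precong_sup_mem (hC : IsMonotonePrecongruence C) (q : Fin n → Trop)
    {ι : Type} (s : Finset ι) (F : ι → Fin n → Trop) (h : ∀ k ∈ s, (q, F k) ∈ C) :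
    (q, fun j => s.sup (fun k => F k j)) ∈ C := by
  classical
  induction s using Finset.induction_on with
  | empty =>
    simpa using hC.monotone_mem (q, fun _ => ⊥) (fun j => bot_le)
  | @insert k s hks ih =>
    have h1 := hC.add_mem _ (h k (Finset.mem_insert_self k s))
      _ (ih (fun k' hk' => h k' (Finset.mem_insert_of_mem hk')))
    have he : ((q, F k).1 ⊔ (q, fun j => s.sup (fun k => F k j)).1,
        (q, F k).2 ⊔ (q, fun j => s.sup (fun k => F k j)).2)
        = (q, fun j => (insert k s).sup (fun k => F k j)) := by
      apply Prod.ext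
      · exact sup_idem q
      · funext j
        show F k j ⊔ s.sup (fun k' => F k' j) = (insert k s).sup (fun k' => F k' j)
        rw [Finset.sup_insert]
    rw [he] at h1
    exact h1

lemma delta_decomp (z : Fin n → Trop) :
    z = fun j => Finset.univ.sup (fun i => if j = i then z i else ⊥) := by
  funext j
  apply le_antisymm
  · have := Finset.le_sup (f := fun i => if j = i then z i else ⊥) (Finset.mem_univ j)
    simpa using this
  · apply Finset.sup_le
    intro i _
    by_cases hj : j = i
    · rw [if_pos hj, hj]
    · rw [if_neg hj]; exact bot_le

lemma tropExp_sup (a b : Trop) : tropExp (a ⊔ b) = tropExp a ⊔ tropExp b := by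
  have := congrArg (fun x : NNReal => (x : ℝ)) (tE_sup a b)
  simpa using this

theorem precong_sep (hC : IsMonotonePrecongruence C) (hcl : IsClosed C)
    {p m : Fin n → Trop} (hpm : (p, m) ∉ C) :
    ∃ a : Fin n → Trop, (∀ f ∈ C, tdot f.2 a ≤ tdot f.1 a) ∧ tdot p a < tdot m a := by
  classical
  -- Step A : find a real shift of p which is still not related to m
  have hstepA : ∃ T : ℕ, ((fun i => p i ⊔ ↑(-(T : ℝ))), m) ∉ C := by
    by_contra hc
    push_neg at hc
    have hexp : Tendsto (fun T : ℕ => Real.exp (-(T : ℝ))) atTop (𝓝 0) :=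
      Real.tendsto_exp_atBot.comp (tendsto_neg_atBot_iff.2 tendsto_natCast_atTop_atTop)
    have hlim1 : ∀ i, Tendsto (fun T : ℕ => p i ⊔ ↑(-(T : ℝ))) atTop (𝓝 (p i)) := by
      intro i
      rw [isEmbedding_tropExp.tendsto_nhds_iff]
      have he : (tropExp ∘ fun T : ℕ => p i ⊔ ↑(-(T : ℝ)))
          = fun T : ℕ => tropExp (p i) ⊔ tropExp ↑(-(T : ℝ)) := by
        funext T
        exact tropExp_sup _ _
      rw [he]
      have h := Filter.Tendsto.max (tendsto_const_nhds (x := tropExp (p i))) hexp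
      rw [max_eq_left (tropExp_nonneg _)] at h
      exact h
    have hlim : Tendsto (fun T : ℕ => ((fun i => p i ⊔ ↑(-(T : ℝ))), m)) atTop (𝓝 (p, m)) := by
      apply Filter.Tendsto.prodMk_nhds
      · rw [tendsto_pi_nhds]
        exact hlim1
      · exact tendsto_const_nhds
    exact hpm (hcl.mem_of_tendsto hlim (Filter.Eventually.of_forall hc))
  obtain ⟨T, hT⟩ := hstepA
  set pr : Fin n → ℝ := fun i => WithBot.unbotD (-(T : ℝ)) (p i) ⊔ (-(T : ℝ)) with hprdef
  set p' : Fin n → Trop := fun i => (↑(pr i) : Trop) with hp'def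
  have hp' : p' = fun i => p i ⊔ ↑(-(T : ℝ)) := by
    funext i
    show (↑(WithBot.unbotD (-(T : ℝ)) (p i) ⊔ (-(T : ℝ))) : Trop) = p i ⊔ ↑(-(T : ℝ))
    induction p i using WithBot.recBotCoe with
    | bot => simp
    | coe v =>
      rw [WithBot.unbotD_coe]
      rcases le_total v (-(T : ℝ)) with h | h
      · rw [sup_eq_right.2 h,
          sup_eq_right.2 (show (↑v : Trop) ≤ ↑(-(T : ℝ)) from by exact_mod_cast h)]
      · rw [sup_eq_left.2 h,
          sup_eq_left.2 (show (↑(-(T : ℝ)) : Trop) ≤ ↑v from by exact_mod_cast h)]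
  have hp'm : (p', m) ∉ C := by rw [hp']; exact hT
  have hple : p ≤ p' := by
    rw [hp']
    exact fun i => le_sup_left
  -- the sets Λ i
  set Lam : Fin n → Set ℝ :=
    fun i => {r : ℝ | (p', fun j => if j = i then (↑r : Trop) else ⊥) ∈ C} with hLamdef
  have hLamne : ∀ i, pr i ∈ Lam i := by
    intro i
    apply hC.monotone_mem (p', fun j => if j = i then (↑(pr i) : Trop) else ⊥)
    intro j
    show (if j = i then (↑(pr i) : Trop) else ⊥) ≤ p' j
    by_cases hj : j = i
    · rw [if_pos hj, hj]
    · rw [if_neg hj]; exact bot_le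
  have hLamdc : ∀ i (r r' : ℝ), r' ≤ r → r ∈ Lam i → r' ∈ Lam i := by
    intro i r r' hle hr
    have h2 : ((fun j => if j = i then (↑r : Trop) else ⊥),
        (fun j => if j = i then (↑r' : Trop) else ⊥)) ∈ C := by
      apply hC.monotone_mem
      intro j
      show (if j = i then (↑r' : Trop) else ⊥) ≤ (if j = i then (↑r : Trop) else ⊥)
      by_cases hj : j = i
      · rw [if_pos hj, if_pos hj]; exact_mod_cast hle
      · rw [if_neg hj, if_neg hj]
    exact hC.trans_mem _ hr _ h2 rfl
  have hLamcl : ∀ i, IsClosed (Lam i) := by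
    intro i
    have he : Lam i = (fun r : ℝ =>
        ((p', fun j => if j = i then (↑r : Trop) else ⊥))) ⁻¹' C := rfl
    rw [he]
    apply IsClosed.preimage _ hcl
    apply Continuous.prodMk continuous_const
    apply continuous_pi
    intro j
    by_cases hj : j = i
    · simp only [if_pos hj]
      exact continuous_coe_trop
    · simp only [if_neg hj]
      exact continuous_const
  set c : Fin n → ℝ := fun i => if BddAbove (Lam i) then sSup (Lam i) else 0 with hcdef
  have hceq : ∀ i, BddAbove (Lam i) → c i = sSup (Lam i) := by
    intro i hb
    rw [hcdef]
    simp only [if_pos hb]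
  have hcmem : ∀ i, BddAbove (Lam i) → c i ∈ Lam i := by
    intro i hb
    rw [hceq i hb]
    exact (hLamcl i).csSup_mem ⟨pr i, hLamne i⟩ hb
  have hcbig : ∀ i, ¬BddAbove (Lam i) → ∀ r : ℝ, r ∈ Lam i := by
    intro i hb r
    obtain ⟨r', hr', hlt⟩ := not_bddAbove_iff.1 hb r
    exact hLamdc i r' r hlt.le hr'
  have hprc : ∀ i, BddAbove (Lam i) → pr i ≤ c i := by
    intro i hb
    rw [hceq i hb]
    exact le_csSup hb (hLamne i)
  -- the box lemma
  have boxfwd : ∀ z, (p', z) ∈ C → ∀ i, BddAbove (Lam i) → z i ≤ ↑(c i) := by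
    intro z hz i hb
    rcases eq_or_ne (z i) ⊥ with hzi | hzi
    · rw [hzi]; exact bot_le
    · obtain ⟨r, hr⟩ := WithBot.ne_bot_iff_exists.1 hzi
      have hdelta : ((z, fun j => if j = i then (↑r : Trop) else ⊥)) ∈ C := by
        apply hC.monotone_mem
        intro j
        show (if j = i then (↑r : Trop) else ⊥) ≤ z j
        by_cases hj : j = i
        · rw [if_pos hj, hj]; exact hr.le
        · rw [if_neg hj]; exact bot_le
      have hrmem : r ∈ Lam i := hC.trans_mem _ hz _ hdelta rfl
      rw [← hr, hceq i hb]
      exact_mod_cast le_csSup hb hrmem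
  have boxbwd : ∀ z, (∀ i, BddAbove (Lam i) → z i ≤ ↑(c i)) → (p', z) ∈ C := by
    intro z hz
    have hall : ∀ i, (p', fun j => if j = i then z i else ⊥) ∈ C := by
      intro i
      rcases eq_or_ne (z i) ⊥ with hzi | hzi
      · apply hC.monotone_mem
        intro j
        show (if j = i then z i else ⊥) ≤ p' j
        by_cases hj : j = i
        · rw [if_pos hj, hzi]; exact bot_le
        · rw [if_neg hj]; exact bot_le
      · obtain ⟨r, hr⟩ := WithBot.ne_bot_iff_exists.1 hzi
        have he : (fun j => if j = i then (↑r : Trop) else ⊥)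
            = fun j => if j = i then z i else ⊥ := by
          funext j
          by_cases hj : j = i <;> simp [hj, hr]
        by_cases hb : BddAbove (Lam i)
        · have hrc : r ≤ c i := by
            have := hz i hb
            rw [← hr] at this
            exact_mod_cast this
          have hmem : (p', fun j => if j = i then (↑r : Trop) else ⊥) ∈ C :=
            hLamdc i (c i) r hrc (hcmem i hb)
          rwa [he] at hmem
        · have hmem : (p', fun j => if j = i then (↑r : Trop) else ⊥) ∈ C := hcbig i hb r
          rwa [he] at hmem
    have h := precong_sup_mem hC p' Finset.univ
      (fun i => fun j => if j = i then z i else ⊥) (fun i _ => hall i)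
    rwa [← delta_decomp z] at h
  -- the separating functional
  set a : Fin n → Trop := fun i => if BddAbove (Lam i) then (↑(-(c i)) : Trop) else ⊥
    with hadef
  have ha : ∀ i, BddAbove (Lam i) → a i = ↑(-(c i)) := by
    intro i hb
    rw [hadef]
    simp only [if_pos hb]
  have ha' : ∀ i, ¬BddAbove (Lam i) → a i = ⊥ := by
    intro i hb
    rw [hadef]
    simp only [if_neg hb]
  refine ⟨a, ?_, ?_⟩
  · -- monotonicity of a along C
    intro f hf
    have key : ∀ μ : ℝ, tdot f.1 a ≤ ↑μ → tdot f.2 a ≤ ↑μ := by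
      intro μ hu
      have hbox1 : ∀ i, BddAbove (Lam i) → tsmul (↑(-μ)) f.1 i ≤ ↑(c i) := by
        intro i hb
        have h1 : f.1 i + a i ≤ ↑μ := (le_tdot f.1 a i).trans hu
        rw [ha i hb, trop_addneg_le_iff] at h1
        show (↑(-μ) : Trop) + f.1 i ≤ ↑(c i)
        rw [trop_negadd_le_iff]
        exact h1
      have h1 : (p', tsmul (↑(-μ)) f.1) ∈ C := boxbwd _ hbox1
      have h2 := hC.smul_mem _ h1 (↑μ : Trop)
      have he : tsmul (↑μ) (tsmul (↑(-μ)) f.1) = f.1 := by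
        funext i
        show (↑μ : Trop) + ((↑(-μ) : Trop) + f.1 i) = f.1 i
        rw [← add_assoc, ← WithBot.coe_add]
        norm_num
      rw [he] at h2
      have h3 := hC.trans_mem _ h2 _ hf rfl
      have h4 := hC.smul_mem _ h3 (↑(-μ) : Trop)
      have he2 : tsmul (↑(-μ)) (tsmul (↑μ) p') = p' := by
        funext i
        show (↑(-μ) : Trop) + ((↑μ : Trop) + p' i) = p' i
        rw [← add_assoc, ← WithBot.coe_add]
        norm_num
      rw [he2] at h4
      have h5 := boxfwd _ h4
      apply tdot_le
      intro i
      by_cases hb : BddAbove (Lam i)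
      · have h6 : (↑(-μ) : Trop) + f.2 i ≤ ↑(c i) := h5 i hb
        rw [trop_negadd_le_iff] at h6
        rw [ha i hb, trop_addneg_le_iff]
        exact h6
      · rw [ha' i hb, WithBot.add_bot]
        exact bot_le
    by_cases hbt : tdot f.1 a = ⊥
    · have hb2 : tdot f.2 a = ⊥ :=
        eq_bot_of_le_all (fun r => key r (by rw [hbt]; exact bot_le))
      rw [hb2, hbt]
    · obtain ⟨r, hr⟩ := WithBot.ne_bot_iff_exists.1 hbt
      exact (key r (by rw [← hr])).trans (by rw [← hr])
  · -- strict separation of p' (hence p) and m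
    have hmex : ∃ i, BddAbove (Lam i) ∧ ↑(c i) < m i := by
      by_contra hcont
      push_neg at hcont
      exact hp'm (boxbwd m (fun i hb => hcont i hb))
    obtain ⟨i0, hb0, hlt0⟩ := hmex
    obtain ⟨s, hs⟩ := WithBot.ne_bot_iff_exists.1 (ne_bot_of_gt hlt0)
    have hcs : c i0 < s := by
      rw [← hs] at hlt0
      exact_mod_cast hlt0
    have hma : (↑(s - c i0) : Trop) ≤ tdot m a := by
      have hle := le_tdot m a i0
      rw [← hs, ha i0 hb0, ← WithBot.coe_add, show s + -(c i0) = s - c i0 by ring] at hle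
      exact hle
    have hpa : tdot p a ≤ (↑(0 : ℝ) : Trop) := by
      apply le_trans (tdot_mono_left hple a)
      apply tdot_le
      intro i
      by_cases hb : BddAbove (Lam i)
      · rw [ha i hb]
        show (↑(pr i) : Trop) + ↑(-(c i)) ≤ ↑(0 : ℝ)
        rw [← WithBot.coe_add]
        exact_mod_cast (by linarith [hprc i hb] : pr i + -(c i) ≤ 0)
      · rw [ha' i hb, WithBot.add_bot]
        exact bot_le
    calc tdot p a ≤ (↑(0 : ℝ) : Trop) := hpa
      _ < ↑(s - c i0) := by exact_mod_cast (by linarith : (0 : ℝ) < s - c i0)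
      _ ≤ tdot m a := hma

end separation

/-! ### the signed polar of any set is a closed signed bend cone -/

section polar
variable {n : ℕ}

lemma update_bot_le (x : Fin n → Trop) (i : Fin n) : Function.update x i ⊥ ≤ x := by
  intro j
  by_cases hj : j = i
  · subst hj; rw [Function.update_self]; exact bot_le
  · rw [Function.update_of_ne hj]

lemma signedPolar_bendCone (A : Set (Fin n → Trop)) : IsSignedBendCone (signedPolar A) where
  signed := fun x hx => hx.1
  pos_mem := fun xp => ⟨fun i => Or.inr rfl, fun a _ => by rw [tdot_bot]; exact bot_le⟩
  smul_mem := by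
    intro x hx l
    constructor
    · intro i
      rcases hx.1 i with h | h
      · left; show l + x.1 i = ⊥; rw [h, WithBot.add_bot]
      · right; show l + x.2 i = ⊥; rw [h, WithBot.add_bot]
    · intro a ha
      rw [tdot_tsmul, tdot_tsmul]
      exact add_le_add_right (hx.2 a ha) l
  add_vee_mem := by
    intro x hx y hy
    refine ⟨vee_signed _, fun a ha => vee_tdot ?_⟩
    show tdot (x.2 ⊔ y.2) a ≤ tdot (x.1 ⊔ y.1) a
    rw [tdot_sup_left, tdot_sup_left]
    exact sup_le_sup (hx.2 a ha) (hy.2 a ha)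
  addI_vee_mem := by
    intro x hx y hy i hxy
    refine ⟨vee_signed _, fun a ha => vee_tdot ?_⟩
    show tdot (Function.update x.2 i ⊥ ⊔ y.2) a ≤ tdot (x.1 ⊔ Function.update y.1 i ⊥) a
    rw [tdot_sup_left]
    apply sup_le
    · exact le_trans (tdot_mono_left (update_bot_le x.2 i) a)
        (le_trans (hx.2 a ha) (tdot_mono_left le_sup_left a))
    · have hdec : tdot y.1 a ≤ tdot (Function.update y.1 i ⊥) a ⊔ (y.1 i + a i) := by
        apply tdot_le
        intro j
        by_cases hj : j = i
        · subst hj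
          exact le_sup_right
        · have he : y.1 j = Function.update y.1 i ⊥ j := (Function.update_of_ne hj _ _).symm
          rw [he]
          exact le_trans (le_tdot _ a j) le_sup_left
      have h2 : y.1 i + a i ≤ tdot x.1 a := by
        rw [← hxy]
        exact le_trans (le_tdot x.2 a i) (hx.2 a ha)
      calc tdot y.2 a ≤ tdot y.1 a := hy.2 a ha
        _ ≤ tdot (Function.update y.1 i ⊥) a ⊔ (y.1 i + a i) := hdec
        _ ≤ tdot (x.1 ⊔ Function.update y.1 i ⊥) a := by
            apply sup_le
            · exact tdot_mono_left le_sup_right a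
            · exact h2.trans (tdot_mono_left le_sup_left a)

lemma continuous_finset_sup_nnreal {X : Type*} [TopologicalSpace X] {ι : Type*}
    (s : Finset ι) (f : ι → X → NNReal) (hf : ∀ i, Continuous (f i)) :
    Continuous fun x => s.sup fun i => f i x := by
  classical
  induction s using Finset.induction_on with
  | empty => simpa using continuous_const
  | @insert k s hks ih =>
    have he : (fun x => (insert k s).sup fun i => f i x)
        = fun x => (f k x) ⊔ (s.sup fun i => f i x) := by
      funext x
      rw [Finset.sup_insert]
    rw [he]
    exact Continuous.max (hf k) ih

lemma continuous_tE_tdot (a : Fin n → Trop) :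
    Continuous (fun z : Fin n → Trop => tE (tdot z a)) := by
  have he : (fun z : Fin n → Trop => tE (tdot z a))
      = fun z => Finset.univ.sup (fun i => tE (z i) * tE (a i)) := by
    funext z
    rw [tdot, Finset.comp_sup_eq_sup_comp tE (fun x y => tE_sup x y) (by rw [tE_bot]; rfl)]
    exact Finset.sup_congr rfl (fun i _ => tE_add _ _)
  rw [he]
  exact continuous_finset_sup_nnreal _ _
    (fun i => ((continuous_tE.comp (continuous_apply i)).mul continuous_const))

lemma signedPolar_closed (A : Set (Fin n → Trop)) :
    IsClosed ((Subtype.val :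
      {x : (Fin n → Trop) × (Fin n → Trop) // SignedVecPair x} →
        (Fin n → Trop) × (Fin n → Trop)) ⁻¹' signedPolar A) := by
  have he : ((Subtype.val :
      {x : (Fin n → Trop) × (Fin n → Trop) // SignedVecPair x} →
        (Fin n → Trop) × (Fin n → Trop)) ⁻¹' signedPolar A) =
      ⋂ a ∈ A, {s : {x : (Fin n → Trop) × (Fin n → Trop) // SignedVecPair x} |
        tE (tdot s.val.2 a) ≤ tE (tdot s.val.1 a)} := by
    ext s
    simp only [Set.mem_preimage, signedPolar, Set.mem_setOf_eq, Set.mem_iInter]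
    constructor
    · rintro ⟨-, h⟩ a ha
      exact tE_le_iff.2 (h a ha)
    · intro h
      exact ⟨s.2, fun a ha => tE_le_iff.1 (h a ha)⟩
  rw [he]
  apply isClosed_biInter
  intro a ha
  apply isClosed_le
  · exact (continuous_tE_tdot a).comp (continuous_snd.comp continuous_subtype_val)
  · exact (continuous_tE_tdot a).comp (continuous_fst.comp continuous_subtype_val)

end polar

/-! ### main theorem -/

/-- Characterization of signed polars: a set U of signed pairs is the signed polar
of some subset A ⊆ 𝕋ⁿ iff U is a signed bend cone that is closed in the subspace
of signed pairs of (𝕋ⁿ)². -/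
theorem signedPolar_characterization {n : ℕ}
    (U : Set ((Fin n → Trop) × (Fin n → Trop)))
    (hU : ∀ x ∈ U, SignedVecPair x) :
    (IsSignedBendCone U ∧
        IsClosed ((Subtype.val :
          {x : (Fin n → Trop) × (Fin n → Trop) // SignedVecPair x} →
            (Fin n → Trop) × (Fin n → Trop)) ⁻¹' U)) ↔
      ∃ A : Set (Fin n → Trop), U = signedPolar A := by
  constructor
  · rintro ⟨hR, hcl⟩
    refine ⟨onePolar U, ?_⟩
    ext x
    constructor
    · intro hx
      exact ⟨hU x hx, fun a ha => ha x hx⟩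
    · rintro ⟨hsx, hsep⟩
      by_contra hx
      have hC := C0_precong hR
      have hCcl := C0_closed hR hcl
      have hxC : (x.1, x.2) ∉ {f : (Fin n → Trop) × (Fin n → Trop) | vee f ∈ U} := by
        intro hc
        apply hx
        have hc' : vee x ∈ U := hc
        rwa [vee_of_signed hsx] at hc'
      obtain ⟨a, hmono, hlt⟩ := precong_sep hC hCcl hxC
      have haU : a ∈ onePolar U := by
        intro u hu
        have huC : u ∈ {f : (Fin n → Trop) × (Fin n → Trop) | vee f ∈ U} := by
          show vee u ∈ U
          rw [vee_of_signed (hU u hu)]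
          exact hu
        exact hmono u huC
      exact absurd (hsep a haU) (not_le.2 hlt)
  · rintro ⟨A, rfl⟩
    exact ⟨signedPolar_bendCone A, signedPolar_closed A⟩
end

section
/- Let A ⊆ 𝕋ⁿ. Then the closure of the interior of the signed polar A° equals A°, where closure and interior are taken in the space of signed pairs of (𝕋ⁿ)² (identified with (𝕊^∨)ⁿ with its topology). -/
/-- The signed polar of A ⊆ 𝕋ⁿ, viewed as a subset of the space of signed pairs
of (𝕋ⁿ)² (identified with (𝕊^∨)ⁿ with its subspace topology). -/
def signedPolarSub {n : ℕ} (A : Set (Fin n → Trop)) :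
    Set {x : (Fin n → Trop) × (Fin n → Trop) // SignedVecPair x} :=
  {x | ∀ a ∈ A, tdot x.val.2 a ≤ tdot x.val.1 a}


open scoped NNReal
open Filter Topology

noncomputable def tropEquiv : Trop ≃ ℝ≥0 where
  toFun x := WithBot.recBotCoe 0 (fun r => ⟨Real.exp r, (Real.exp_pos r).le⟩) x
  invFun y := if y = 0 then (⊥ : Trop) else ((Real.log (y : ℝ) : ℝ) : Trop)
  left_inv x := by
    induction x using WithBot.recBotCoe with
    | bot => simp; rfl
    | coe r =>
      have h : (⟨Real.exp r, (Real.exp_pos r).le⟩ : ℝ≥0) ≠ 0 := by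
        intro h
        exact (Real.exp_pos r).ne' (congrArg (fun t : ℝ≥0 => (t : ℝ)) h)
      show (if (⟨Real.exp r, (Real.exp_pos r).le⟩ : ℝ≥0) = 0 then (⊥ : Trop) else ((Real.log (Real.exp r) : ℝ) : Trop)) = r
      simp [if_neg h, Real.log_exp]
  right_inv y := by
    by_cases h : y = 0
    · simp [h]; rfl
    · have hy : (0 : ℝ) < y := NNReal.coe_pos.mpr (pos_iff_ne_zero.mpr h)
      simp only [if_neg h, WithBot.recBotCoe_coe]
      apply Subtype.ext
      show Real.exp (Real.log y) = y
      simp [Real.exp_log hy]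

lemma coe_tropEquiv (x : Trop) : (tropEquiv x : ℝ) = tropExp x := by induction x using WithBot.recBotCoe <;> rfl

lemma tropEquiv_bot : tropEquiv ⊥ = 0 := rfl

lemma tropEquiv_eq_zero_iff {x : Trop} : tropEquiv x = 0 ↔ x = ⊥ := by
  induction x using WithBot.recBotCoe with
  | bot => simp [tropEquiv_bot]
  | coe r =>
    simp only [WithBot.coe_ne_bot, iff_false]
    intro h
    have h2 : Real.exp r = 0 := by
      simpa [coe_tropEquiv, tropExp] using congrArg (fun t : ℝ≥0 => (t : ℝ)) h
    exact (Real.exp_pos r).ne' h2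

lemma tropEquiv_le_iff {x y : Trop} : tropEquiv x ≤ tropEquiv y ↔ x ≤ y := by
  rw [← NNReal.coe_le_coe, coe_tropEquiv, coe_tropEquiv]
  induction x using WithBot.recBotCoe with
  | bot =>
    induction y using WithBot.recBotCoe with
    | bot => simp [tropExp]
    | coe s => simp [tropExp, (Real.exp_pos s).le]
  | coe r =>
    induction y using WithBot.recBotCoe with
    | bot =>
      simp only [tropExp, WithBot.recBotCoe_coe, WithBot.recBotCoe_bot]
      constructor
      · intro h; exact absurd h (not_le.2 (Real.exp_pos r))
      · intro h; exact absurd h (by simp)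
    | coe s => simp [tropExp, Real.exp_le_exp, WithBot.coe_le_coe]

lemma tropEquiv_mono : Monotone (tropEquiv : Trop → ℝ≥0) := fun _ _ h => tropEquiv_le_iff.2 h

lemma tropEquiv_add (x y : Trop) : tropEquiv (x + y) = tropEquiv x * tropEquiv y := by
  induction x using WithBot.recBotCoe with
  | bot => simp [tropEquiv_bot]
  | coe r =>
    induction y using WithBot.recBotCoe with
    | bot => simp [tropEquiv_bot]
    | coe s =>
      rw [← WithBot.coe_add]
      ext
      show Real.exp (r + s) = Real.exp r * Real.exp s
      exact Real.exp_add r s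

lemma tropExp_isInducing : IsInducing tropExp := ⟨rfl⟩

lemma tropEquiv_isInducing : IsInducing (tropEquiv : Trop → ℝ≥0) := by
  have hval : IsInducing (Subtype.val : ℝ≥0 → ℝ) := IsInducing.subtypeVal
  refine hval.of_comp_iff.1 ?_
  have : (Subtype.val : ℝ≥0 → ℝ) ∘ (tropEquiv : Trop → ℝ≥0) = tropExp := by
    funext x; induction x using WithBot.recBotCoe <;> rfl
  rw [this]
  exact tropExp_isInducing

noncomputable def tropHomeo : Trop ≃ₜ ℝ≥0 :=
  Equiv.toHomeomorphOfIsInducing tropEquiv tropEquiv_isInducing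

noncomputable def pairHomeo (n : ℕ) :
    ((Fin n → Trop) × (Fin n → Trop)) ≃ₜ ((Fin n → ℝ≥0) × (Fin n → ℝ≥0)) :=
  (Homeomorph.piCongrRight fun _ => tropHomeo).prodCongr
    (Homeomorph.piCongrRight fun _ => tropHomeo)

lemma pairHomeo_apply {n : ℕ} (x : (Fin n → Trop) × (Fin n → Trop)) :
    pairHomeo n x = (fun i => tropEquiv (x.1 i), fun i => tropEquiv (x.2 i)) := rfl

def SP {n : ℕ} (u : (Fin n → ℝ≥0) × (Fin n → ℝ≥0)) : Prop := ∀ i, u.1 i = 0 ∨ u.2 i = 0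

lemma signed_iff {n : ℕ} (x : (Fin n → Trop) × (Fin n → Trop)) :
    SignedVecPair x ↔ SP (pairHomeo n x) := by
  rw [pairHomeo_apply]
  exact forall_congr' fun i => or_congr tropEquiv_eq_zero_iff.symm tropEquiv_eq_zero_iff.symm

noncomputable def signedHomeo (n : ℕ) :
    {x : (Fin n → Trop) × (Fin n → Trop) // SignedVecPair x} ≃ₜ
      {u : (Fin n → ℝ≥0) × (Fin n → ℝ≥0) // SP u} :=
  (pairHomeo n).subtype signed_iff

noncomputable def nsup {n : ℕ} (x α : Fin n → ℝ≥0) : ℝ≥0 :=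
  Finset.univ.sup fun i => x i * α i

def Pol {n : ℕ} (B : Set (Fin n → ℝ≥0)) : Set {u : (Fin n → ℝ≥0) × (Fin n → ℝ≥0) // SP u} :=
  {u | ∀ α ∈ B, nsup u.val.2 α ≤ nsup u.val.1 α}

lemma tropEquiv_tdot {n : ℕ} (x a : Fin n → Trop) :
    tropEquiv (tdot x a) = nsup (fun i => tropEquiv (x i)) (fun i => tropEquiv (a i)) := by
  unfold tdot nsup
  rw [Finset.comp_sup_eq_sup_comp (tropEquiv : Trop → ℝ≥0)
    (fun a b => tropEquiv_mono.map_sup a b) (by simp [tropEquiv_bot])]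
  congr 1
  funext i
  exact tropEquiv_add _ _

lemma tdot_le_iff {n : ℕ} (x y a : Fin n → Trop) :
    tdot x a ≤ tdot y a ↔
      nsup (fun i => tropEquiv (x i)) (fun i => tropEquiv (a i)) ≤
        nsup (fun i => tropEquiv (y i)) (fun i => tropEquiv (a i)) := by
  rw [← tropEquiv_tdot, ← tropEquiv_tdot, tropEquiv_le_iff]

lemma continuous_nsup {n : ℕ} {X : Type*} [TopologicalSpace X] (α : Fin n → ℝ≥0)
    {f : X → (Fin n → ℝ≥0)} (hf : Continuous f) :
    Continuous fun x => nsup (f x) α := by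
  unfold nsup
  suffices h : ∀ s : Finset (Fin n), Continuous fun x => s.sup fun i => f x i * α i from h _
  intro s
  induction s using Finset.cons_induction with
  | empty => simpa using continuous_const
  | cons a s ha ih =>
    simp only [Finset.sup_cons]
    exact (((continuous_apply a).comp hf).mul continuous_const).max ih

lemma isClosed_Pol {n : ℕ} (B : Set (Fin n → ℝ≥0)) : IsClosed (Pol B) := by
  have h : Pol B = ⋂ α ∈ B, {u : {u : (Fin n → ℝ≥0) × (Fin n → ℝ≥0) // SP u} |
      nsup u.val.2 α ≤ nsup u.val.1 α} := by
    ext u; simp [Pol, Set.mem_iInter]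
  rw [h]
  refine isClosed_biInter fun α _ => isClosed_le ?_ ?_
  · exact continuous_nsup α (continuous_snd.comp continuous_subtype_val)
  · exact continuous_nsup α (continuous_fst.comp continuous_subtype_val)

lemma le_nsup {n : ℕ} (x α : Fin n → ℝ≥0) (i : Fin n) : x i * α i ≤ nsup x α := by
  exact Finset.le_sup (f := fun i => x i * α i) (Finset.mem_univ i)

theorem closure_interior_Pol {n : ℕ} (B : Set (Fin n → ℝ≥0)) :
    closure (interior (Pol B)) = Pol B := by
  classical
  refine subset_antisymm (closure_minimal interior_subset (isClosed_Pol B)) ?_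
  intro u hu
  -- the perturbation parameters
  set c : ℕ → ℝ≥0 := fun k => ((k : ℝ≥0) + 1)⁻¹ with hcdef
  have hcpos : ∀ k, 0 < c k := fun k => by positivity
  have hctend : Tendsto c atTop (𝓝 0) := by
    rw [← NNReal.tendsto_coe]
    have : (fun k : ℕ => ((c k : ℝ))) = fun k : ℕ => 1 / ((k : ℝ) + 1) := by
      funext k; simp [hcdef, one_div]
    rw [this]
    simpa using tendsto_one_div_add_atTop_nhds_zero_nat (𝕜 := ℝ)
  set r : ℕ → ℝ≥0 := fun k => (1 + c k)⁻¹ with hrdef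
  have hrpos : ∀ k, 0 < r k := fun k => by positivity
  have hrlt : ∀ k, r k < 1 := by
    intro k
    rw [hrdef]
    have h1 : (1 : ℝ≥0) < 1 + c k := by
      simpa using (hcpos k)
    calc (1 + c k)⁻¹ < 1⁻¹ := by
          exact inv_strictAnti₀ one_pos h1
      _ = 1 := inv_one
  have hrtend : Tendsto r atTop (𝓝 1) := by
    have h1 : Tendsto (fun k => 1 + c k) atTop (𝓝 (1 + 0)) :=
      tendsto_const_nhds.add hctend
    rw [add_zero] at h1
    simpa using h1.inv₀ one_ne_zero
  -- the approximating sequence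
  have sgn : ∀ k : ℕ, SP ((fun i => if u.val.2 i = 0 then u.val.1 i ⊔ c k else 0),
      fun i => r k * u.val.2 i) := by
    intro k i
    by_cases h : u.val.2 i = 0
    · right; simp [h]
    · left; simp [h]
  set Y : ℕ → {u : (Fin n → ℝ≥0) × (Fin n → ℝ≥0) // SP u} := fun k => ⟨_, sgn k⟩ with hYdef
  -- convergence
  have hY : Tendsto Y atTop (𝓝 u) := by
    rw [tendsto_subtype_rng]
    refine Filter.Tendsto.prodMk_nhds ?_ ?_
    · rw [tendsto_pi_nhds]
      intro i
      by_cases h : u.val.2 i = 0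
      · simp only [hYdef, if_pos h]
        have := (tendsto_const_nhds : Tendsto (fun _ : ℕ => u.val.1 i) atTop _).max hctend
        simp only [max_eq_left (zero_le (a := u.val.1 i))] at this
        simpa using this
      · have h1 : u.val.1 i = 0 := (u.property i).resolve_right h
        simp only [hYdef, if_neg h, h1]
        exact tendsto_const_nhds
    · rw [tendsto_pi_nhds]
      intro i
      have := hrtend.mul (tendsto_const_nhds : Tendsto (fun _ : ℕ => u.val.2 i) atTop _)
      simpa using this
  -- interior membership
  have hint : ∀ k, Y k ∈ interior (Pol B) := by
    intro k
    set p : ℝ≥0 := (1 + r k) / 2 with hpdef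
    set q : ℝ≥0 := p / r k with hqdef
    have hppos : 0 < p := by rw [hpdef]; positivity
    have hp1 : p < 1 := by
      rw [hpdef]
      rw [div_lt_one (by norm_num : (0:ℝ≥0) < 2)]
      calc 1 + r k < 1 + 1 := by exact add_lt_add_right (hrlt k) 1
        _ = 2 := by norm_num
    have hrp : r k < p := by
      rw [hpdef, lt_div_iff₀ (by norm_num : (0:ℝ≥0) < 2)]
      calc r k * 2 = r k + r k := by ring
        _ < 1 + r k := by exact add_lt_add_left (hrlt k) (r k)
    have hq1 : 1 < q := (one_lt_div (hrpos k)).2 hrp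
    have hqr : q * r k = p := div_mul_cancel₀ p (hrpos k).ne'
    set W : Set {u : (Fin n → ℝ≥0) × (Fin n → ℝ≥0) // SP u} :=
      {v | ∀ i, if u.val.2 i = 0 then p * (u.val.1 i ⊔ c k) < v.val.1 i
        else (0 < v.val.2 i ∧ v.val.2 i < q * (r k * u.val.2 i))} with hWdef
    have hWopen : IsOpen W := by
      have : W = ⋂ i, {v : {u : (Fin n → ℝ≥0) × (Fin n → ℝ≥0) // SP u} |
          if u.val.2 i = 0 then p * (u.val.1 i ⊔ c k) < v.val.1 i
          else (0 < v.val.2 i ∧ v.val.2 i < q * (r k * u.val.2 i))} := by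
        ext v; simp [hWdef, Set.mem_iInter]
      rw [this]
      refine isOpen_iInter_of_finite fun i => ?_
      by_cases h : u.val.2 i = 0
      · simp only [if_pos h]
        exact isOpen_lt continuous_const (by fun_prop)
      · simp only [if_neg h]
        exact IsOpen.inter (isOpen_lt continuous_const (by fun_prop))
          (isOpen_lt (by fun_prop) continuous_const)
    have hYW : Y k ∈ W := by
      intro i
      by_cases h : u.val.2 i = 0
      · simp only [hYdef, if_pos h]
        have ht : 0 < u.val.1 i ⊔ c k := lt_of_lt_of_le (hcpos k) le_sup_right
        exact mul_lt_of_lt_one_left ht hp1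
      · simp only [hYdef, if_neg h]
        have hpos : 0 < r k * u.val.2 i := mul_pos (hrpos k) (pos_iff_ne_zero.mpr h)
        exact ⟨hpos, lt_mul_of_one_lt_left hpos hq1⟩
    have hWsub : W ⊆ Pol B := by
      intro v hv α hα
      -- signedness consequences
      have hv2zero : ∀ i, u.val.2 i = 0 → v.val.2 i = 0 := by
        intro i h
        have h1 := hv i
        rw [if_pos h] at h1
        have hpos : 0 < v.val.1 i :=
          lt_of_le_of_lt zero_le h1
        exact (v.property i).resolve_left hpos.ne'
      have step1 : nsup v.val.2 α ≤ q * nsup (fun i => r k * u.val.2 i) α := by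
        refine Finset.sup_le fun i _ => ?_
        by_cases h : u.val.2 i = 0
        · simp [hv2zero i h]
        · have h1 := hv i
          rw [if_neg h] at h1
          calc v.val.2 i * α i ≤ q * (r k * u.val.2 i) * α i :=
                mul_le_mul_left h1.2.le (α i)
            _ = q * ((r k * u.val.2 i) * α i) := by ring
            _ ≤ q * nsup (fun i => r k * u.val.2 i) α :=
                mul_le_mul_right (le_nsup (fun i => r k * u.val.2 i) α i) q
      have step2 : nsup (fun i => r k * u.val.2 i) α = r k * nsup u.val.2 α := by
        unfold nsup
        rw [NNReal.mul_finset_sup]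
        congr 1
        funext i
        ring
      have step4 : nsup u.val.1 α ≤ nsup (fun i => if u.val.2 i = 0 then u.val.1 i ⊔ c k else 0) α := by
        refine Finset.sup_mono_fun fun i _ => ?_
        by_cases h : u.val.2 i = 0
        · simp only [if_pos h]
          exact mul_le_mul_left le_sup_left (α i)
        · have h1 : u.val.1 i = 0 := (u.property i).resolve_right h
          simp [h1]
      have step6 : p * nsup (fun i => if u.val.2 i = 0 then u.val.1 i ⊔ c k else 0) α
          ≤ nsup v.val.1 α := by
        have hterm : ∀ i, p * ((if u.val.2 i = 0 then u.val.1 i ⊔ c k else 0) * α i)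
            ≤ nsup v.val.1 α := by
          intro i
          by_cases h : u.val.2 i = 0
          · have h1 := hv i
            rw [if_pos h] at h1
            calc p * ((if u.val.2 i = 0 then u.val.1 i ⊔ c k else 0) * α i)
                = (p * (u.val.1 i ⊔ c k)) * α i := by rw [if_pos h]; ring
              _ ≤ v.val.1 i * α i := mul_le_mul_left h1.le (α i)
              _ ≤ nsup v.val.1 α := le_nsup v.val.1 α i
          · simp [if_neg h]
        calc p * nsup (fun i => if u.val.2 i = 0 then u.val.1 i ⊔ c k else 0) α
            = Finset.univ.sup fun i =>
                p * ((if u.val.2 i = 0 then u.val.1 i ⊔ c k else 0) * α i) := by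
              unfold nsup; rw [NNReal.mul_finset_sup]
          _ ≤ nsup v.val.1 α := Finset.sup_le fun i _ => hterm i
      calc nsup v.val.2 α ≤ q * nsup (fun i => r k * u.val.2 i) α := step1
        _ = q * (r k * nsup u.val.2 α) := by rw [step2]
        _ ≤ q * (r k * nsup u.val.1 α) := by
            exact mul_le_mul_right (mul_le_mul_right (hu α hα) (r k)) q
        _ ≤ q * (r k * nsup (fun i => if u.val.2 i = 0 then u.val.1 i ⊔ c k else 0) α) := by
            exact mul_le_mul_right (mul_le_mul_right step4 (r k)) q
        _ = p * nsup (fun i => if u.val.2 i = 0 then u.val.1 i ⊔ c k else 0) α := by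
            rw [← mul_assoc, hqr]
        _ ≤ nsup v.val.1 α := step6
    exact mem_interior.2 ⟨W, hWsub, hWopen, hYW⟩
  exact mem_closure_of_tendsto hY (Filter.Eventually.of_forall hint)

lemma signedPolarSub_eq {n : ℕ} (A : Set (Fin n → Trop)) :
    signedPolarSub A = signedHomeo n ⁻¹' Pol ((fun a => fun i => tropEquiv (a i)) '' A) := by
  ext x
  constructor
  · rintro hx α ⟨a, ha, rfl⟩
    exact (tdot_le_iff _ _ _).1 (hx a ha)
  · intro hx a ha
    exact (tdot_le_iff _ _ _).2 (hx _ ⟨a, ha, rfl⟩)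

/-- The closure of the interior of the signed polar A° equals A°, in the space of
signed pairs of (𝕋ⁿ)². -/
theorem closure_interior_signedPolar {n : ℕ} (A : Set (Fin n → Trop)) :
    closure (interior (signedPolarSub A)) = signedPolarSub A := by
  rw [signedPolarSub_eq A, ← Homeomorph.preimage_interior, ← Homeomorph.preimage_closure,
    closure_interior_Pol]
end

section
/- Let a, b, c be signed pairs in 𝕋². Then a ⊙ x₁² ⊕ b ⊙ x₁ ⊙ x₂ ⊕ c ⊙ x₂² ⪰ 𝟘 holds for all signed pairs x₁, x₂ if and only if a ⪰ 𝟘, c ⪰ 𝟘 and b ⊙ b ⪯ a ⊙ c. -/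
/-- A pair (a⁺, a⁻) ∈ 𝕋² is signed if a⁺ = −∞ or a⁻ = −∞. -/
def SignedPair (a : Trop × Trop) : Prop := a.1 = ⊥ ∨ a.2 = ⊥

/-- The order relation ⪯ on pairs: (a⁺,a⁻) ⪯ (b⁺,b⁻) iff max(a⁺,b⁻) ≤ max(a⁻,b⁺). -/
def ple (a b : Trop × Trop) : Prop := max a.1 b.2 ≤ max a.2 b.1

/-- The strict relation ≺ on pairs: (a⁺,a⁻) ≺ (b⁺,b⁻) iff max(a⁺,b⁻) < max(a⁻,b⁺). -/
def plt (a b : Trop × Trop) : Prop := max a.1 b.2 < max a.2 b.1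

/-- Addition ⊕ of pairs in the symmetrized tropical semiring: componentwise max. -/
noncomputable def padd (a b : Trop × Trop) : Trop × Trop := (max a.1 b.1, max a.2 b.2)

/-- Multiplication ⊙ of pairs in the symmetrized tropical semiring. -/
noncomputable def pmul (a b : Trop × Trop) : Trop × Trop :=
  (max (a.1 + b.1) (a.2 + b.2), max (a.1 + b.2) (a.2 + b.1))

/-- The zero pair 𝟘 = (−∞, −∞). -/
def pzero : Trop × Trop := (⊥, ⊥)

private lemma key2' (m p q : WithBot ℝ) (h : m + m ≤ p + q) :
    ∀ u v : WithBot ℝ, m + (u + v) ≤ max (p + (u + u)) (q + (v + v)) := by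
  intro u v
  induction m using WithBot.recBotCoe with
  | bot => simp
  | coe m =>
  induction u using WithBot.recBotCoe with
  | bot => simp
  | coe u =>
  induction v using WithBot.recBotCoe with
  | bot => simp
  | coe v =>
  induction p using WithBot.recBotCoe with
  | bot => simp at h
  | coe p =>
  induction q using WithBot.recBotCoe with
  | bot => simp at h
  | coe q =>
  have h' : m + m ≤ p + q := by exact_mod_cast h
  have : m + (u + v) ≤ max (p + (u + u)) (q + (v + v)) := by
    rcases le_total (p + (u + u)) (q + (v + v)) with h1 | h1
    · rw [max_eq_right h1]; linarith
    · rw [max_eq_left h1]; linarith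
  exact_mod_cast this

private lemma key1' (m p q : WithBot ℝ)
    (h : ∀ u v : WithBot ℝ, m + (u + v) ≤ max (p + (u + u)) (q + (v + v))) :
    m + m ≤ p + q := by
  induction m using WithBot.recBotCoe with
  | bot => simp
  | coe m =>
  induction p using WithBot.recBotCoe with
  | bot =>
    induction q using WithBot.recBotCoe with
    | bot => have := h 0 0; simp at this
    | coe q =>
      exfalso
      have := h ((q - m + 1 : ℝ) : WithBot ℝ) 0
      simp at this
      have := (WithBot.coe_le_coe).mp (by exact_mod_cast this)
      linarith
  | coe p =>
  induction q using WithBot.recBotCoe with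
  | bot =>
    exfalso
    have := h 0 ((p - m + 1 : ℝ) : WithBot ℝ)
    simp at this
    have := (WithBot.coe_le_coe).mp (by exact_mod_cast this)
    linarith
  | coe q =>
    have := h ((-p / 2 : ℝ) : WithBot ℝ) ((-q / 2 : ℝ) : WithBot ℝ)
    have h2 : m + (-p/2 + -q/2) ≤ max (p + (-p/2 + -p/2)) (q + (-q/2 + -q/2)) := by
      exact_mod_cast this
    have h3 : m + m ≤ p + q := by
      rcases le_total (p + (-p/2 + -p/2)) (q + (-q/2 + -q/2)) with h1 | h1 <;>
        [rw [max_eq_right h1] at h2; rw [max_eq_left h1] at h2] <;> linarith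
    exact_mod_cast h3

/-- The signed tropical quadratic form a⊙x₁² ⊕ b⊙x₁⊙x₂ ⊕ c⊙x₂² is nonnegative on all
signed pairs x₁, x₂ iff a ⪰ 𝟘, c ⪰ 𝟘 and b² ⪯ a⊙c. -/
theorem quadratic_psd_dim2 (a b c : Trop × Trop)
    (ha : SignedPair a) (hb : SignedPair b) (hc : SignedPair c) :
    (∀ x₁ x₂ : Trop × Trop, SignedPair x₁ → SignedPair x₂ →
        ple pzero (padd (padd (pmul a (pmul x₁ x₁)) (pmul b (pmul x₁ x₂)))
          (pmul c (pmul x₂ x₂)))) ↔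
      (ple pzero a ∧ ple pzero c ∧ ple (pmul b b) (pmul a c)) := by
  obtain ⟨a1, a2⟩ := a
  obtain ⟨b1, b2⟩ := b
  obtain ⟨c1, c2⟩ := c
  simp only [SignedPair] at ha hb hc
  constructor
  · intro H
    have h1 := H ((0:Trop), ⊥) ((⊥:Trop), ⊥) (Or.inr rfl) (Or.inl rfl)
    simp only [ple, padd, pmul, pzero, WithBot.add_bot, WithBot.bot_add, max_bot_left,
      max_bot_right, max_self, add_zero] at h1
    have hA : a2 = ⊥ := by
      rcases ha with h | h
      · exact le_bot_iff.mp (h ▸ h1)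
      · exact h
    have h1' := H ((⊥:Trop), ⊥) ((0:Trop), ⊥) (Or.inl rfl) (Or.inr rfl)
    simp only [ple, padd, pmul, pzero, WithBot.add_bot, WithBot.bot_add, max_bot_left,
      max_bot_right, max_self, add_zero] at h1'
    have hC : c2 = ⊥ := by
      rcases hc with h | h
      · exact le_bot_iff.mp (h ▸ h1')
      · exact h
    subst hA; subst hC
    refine ⟨by simp [ple, pzero], by simp [ple, pzero], ?_⟩
    have kb1 : b1 + b1 ≤ a1 + c1 := by
      rcases hb with h | h
      · subst h; simp
      · subst h
        apply key1'
        intro u v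
        have h2 := H (u, ⊥) ((⊥:Trop), v) (Or.inr rfl) (Or.inl rfl)
        simp only [ple, padd, pmul, pzero, WithBot.add_bot, WithBot.bot_add, max_bot_left,
          max_bot_right, max_self, add_zero] at h2
        exact h2
    have kb2 : b2 + b2 ≤ a1 + c1 := by
      rcases hb with h | h
      · subst h
        apply key1'
        intro u v
        have h3 := H (u, ⊥) (v, ⊥) (Or.inr rfl) (Or.inr rfl)
        simp only [ple, padd, pmul, pzero, WithBot.add_bot, WithBot.bot_add, max_bot_left,
          max_bot_right, max_self, add_zero] at h3
        exact h3
      · subst h; simp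
    simp only [ple, padd, pmul, pzero, WithBot.add_bot, WithBot.bot_add, max_bot_left,
      max_bot_right, max_self, add_zero]
    exact max_le (kb1.trans (le_max_right _ _)) (kb2.trans (le_max_right _ _))
  · rintro ⟨hA', hC', hB⟩
    simp only [ple, padd, pmul, pzero, WithBot.add_bot, WithBot.bot_add, max_bot_left,
      max_bot_right, max_self, add_zero] at hA' hC'
    have hA : a2 = ⊥ := by
      rcases ha with h | h
      · exact le_bot_iff.mp (h ▸ hA')
      · exact h
    have hC : c2 = ⊥ := by
      rcases hc with h | h
      · exact le_bot_iff.mp (h ▸ hC')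
      · exact h
    subst hA; subst hC
    have hkb : b1 + b1 ≤ a1 + c1 ∧ b2 + b2 ≤ a1 + c1 := by
      rcases hb with h | h <;> subst h <;>
        simp only [ple, padd, pmul, pzero, WithBot.add_bot, WithBot.bot_add, max_bot_left,
          max_bot_right, max_self, add_zero] at hB <;>
        constructor <;> simp_all
    have K1 := key2' b1 a1 c1 hkb.1
    have K2 := key2' b2 a1 c1 hkb.2
    rintro ⟨s, t⟩ ⟨w, z⟩ hx hy
    simp only [SignedPair] at hx hy
    rcases hx with h | h <;> subst h <;> rcases hy with h | h <;> subst h <;>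
      simp only [ple, padd, pmul, pzero, WithBot.add_bot, WithBot.bot_add, max_bot_left,
        max_bot_right, max_self, add_zero] <;>
      first
        | exact (K1 _ _).trans (max_le_max (le_max_left _ _) le_rfl)
        | exact (K2 _ _).trans (max_le_max (le_max_left _ _) le_rfl)
end

section
/- Let A be an n×n symmetric matrix of signed pairs (A_ij = A_ji for all i, j). Then xᵀAx ⪰ 𝟘 holds for every vector x of signed pairs if and only if A_ii ⪰ 𝟘 for all i and A_ij ⊙ A_ij ⪯ A_ii ⊙ A_jj for all i ≠ j. (Characterization of signed tropical positive semidefinite matrices.) -/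
/-- The quadratic form xᵀAx = ⊕_{i,j} x_i ⊙ A_{ij} ⊙ x_j, computed with the
pair operations: its two components are the maxima of the corresponding
components of the terms x_i ⊙ A_{ij} ⊙ x_j. -/
noncomputable def quadForm {n : ℕ} (A : Fin n → Fin n → Trop × Trop)
    (x : Fin n → Trop × Trop) : Trop × Trop :=
  (Finset.univ.sup fun p : Fin n × Fin n => (pmul (pmul (x p.1) (A p.1 p.2)) (x p.2)).1,
   Finset.univ.sup fun p : Fin n × Fin n => (pmul (pmul (x p.1) (A p.1 p.2)) (x p.2)).2)

lemma maxbotl (a : Trop) : max ⊥ a = a := max_eq_right bot_le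
lemma maxbotr (a : Trop) : max a ⊥ = a := max_eq_left bot_le

lemma le_max_of_double {c d e : Trop} (h : c + c ≤ d + e) : c ≤ max d e := by
  induction c using WithBot.recBotCoe with
  | bot => exact bot_le
  | coe r =>
    induction d using WithBot.recBotCoe with
    | bot => simp at h
    | coe d =>
      induction e using WithBot.recBotCoe with
      | bot => simp at h
      | coe e =>
        have h' : r + r ≤ d + e := by exact_mod_cast h
        rw [le_max_iff]
        rcases le_total d e with h'' | h''
        · right; have : r ≤ e := by linarith
          exact_mod_cast this
        · left; have : r ≤ d := by linarith
          exact_mod_cast this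

lemma key_forward {s p q : Trop} (H : ∀ t : ℝ, s + (t:Trop) ≤ max p ((t:Trop) + t + q)) :
    s + s ≤ p + q := by
  induction s using WithBot.recBotCoe with
  | bot => simp
  | coe r =>
    induction p using WithBot.recBotCoe with
    | bot =>
      induction q using WithBot.recBotCoe with
      | bot => have := H 0; simp at this
      | coe q =>
        have h2 := H (r - q - 1)
        rw [maxbotl] at h2
        have h3 : r + (r - q - 1) ≤ (r - q - 1) + (r - q - 1) + q := by exact_mod_cast h2
        linarith
    | coe p =>
      induction q using WithBot.recBotCoe with
      | bot =>
        have h2 := H (p - r + 1)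
        rw [WithBot.add_bot, maxbotr] at h2
        have h3 : r + (p - r + 1) ≤ p := by exact_mod_cast h2
        linarith
      | coe q =>
        have h2 := H ((p - q)/2)
        have h3 : r + (p-q)/2 ≤ max p ((p-q)/2 + (p-q)/2 + q) := by exact_mod_cast h2
        have h4 : r + r ≤ p + q := by
          rcases le_max_iff.mp h3 with h | h <;> linarith
        exact_mod_cast h4

lemma pmul_mag_le (a b : Trop × Trop) :
    max (pmul a b).1 (pmul a b).2 ≤ max a.1 a.2 + max b.1 b.2 := by
  simp only [pmul]
  apply max_le <;> apply max_le <;>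
    exact add_le_add (by simp [le_max_iff, le_refl]) (by simp [le_max_iff, le_refl])

lemma pmul_zero_left (a : Trop × Trop) : pmul ((0:Trop), ⊥) a = a := by
  simp [pmul, maxbotl, maxbotr]

lemma pmul_zero_right (a : Trop × Trop) : pmul a ((0:Trop), ⊥) = a := by
  simp [pmul, maxbotl, maxbotr]

lemma pmul_pzero_left (a : Trop × Trop) : pmul pzero a = pzero := by
  simp [pmul, pzero]

lemma pmul_pzero_right (a : Trop × Trop) : pmul a pzero = pzero := by
  simp [pmul, pzero]


/-- Characterization -/
theorem tropical_psd_characterization {n : ℕ} (A : Fin n → Fin n → Trop × Trop)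
    (hsigned : ∀ i j, SignedPair (A i j)) (hsym : ∀ i j, A i j = A j i) :
    (∀ x : Fin n → Trop × Trop, (∀ i, SignedPair (x i)) → ple pzero (quadForm A x)) ↔
      ((∀ i, ple pzero (A i i)) ∧
        ∀ i j, i ≠ j → ple (pmul (A i j) (A i j)) (pmul (A i i) (A j j))) := by
  constructor
  · intro hPSD
    have ha : ∀ i, ple pzero (A i i) := by
      intro i
      set x : Fin n → Trop × Trop := fun k => if k = i then ((0:Trop), ⊥) else pzero with hx
      have hxi : x i = ((0:Trop), ⊥) := by simp [hx]
      have h := hPSD x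
        (by intro k; by_cases hk : k = i <;> simp [hx, hk, SignedPair, pzero])
      simp only [ple, pzero, quadForm, maxbotl] at h ⊢
      refine le_trans (le_trans ?_ h) ?_
      · refine le_trans ?_ (Finset.le_sup (f := fun p : Fin n × Fin n =>
          (pmul (pmul (x p.1) (A p.1 p.2)) (x p.2)).2) (Finset.mem_univ (i,i)))
        simp only [hxi, pmul_zero_left, pmul_zero_right, le_refl]
      · apply Finset.sup_le
        rintro ⟨k, l⟩ -
        simp only []
        by_cases hk : k = i
        · by_cases hl : l = i
          · rw [hk, hl, hxi, pmul_zero_left, pmul_zero_right]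
          · have hxl : x l = pzero := by simp [hx, hl]
            rw [hxl, pmul_pzero_right]
            exact bot_le
        · have hxk : x k = pzero := by simp [hx, hk]
          rw [hxk, pmul_pzero_left, pmul_pzero_left]
          exact bot_le
    refine ⟨ha, ?_⟩
    have haa : ∀ i, (A i i).2 = ⊥ := by
      intro i
      have h := ha i
      simp only [ple, pzero, maxbotl] at h
      rcases hsigned i i with h1 | h2
      · exact le_bot_iff.mp (h1 ▸ h)
      · exact h2
    intro i j hij
    have Hkey : ∀ w : Trop × Trop, SignedPair w →
        (pmul (A i j) w).2 ≤ max ((A i i).1) (max (pmul (A i j) w).1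
          (max (pmul w (A i j)).1 ((pmul (pmul w (A j j)) w).1))) := by
      intro w hw
      set x : Fin n → Trop × Trop := fun k => if k = i then ((0:Trop), ⊥) else
        if k = j then w else pzero with hx
      have hxi : x i = ((0:Trop), ⊥) := by simp [hx]
      have hxj : x j = w := by simp [hx, hij.symm]
      have h := hPSD x (by
        intro k
        by_cases hk : k = i
        · simp [hx, hk, SignedPair]
        · by_cases hl : k = j
          · simpa [hx, hk, hl, hij.symm] using hw
          · simp [hx, hk, hl, SignedPair, pzero])
      simp only [ple, pzero, quadForm, maxbotl] at h
      refine le_trans (le_trans ?_ h) ?_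
      · refine le_trans ?_ (Finset.le_sup (f := fun p : Fin n × Fin n =>
          (pmul (pmul (x p.1) (A p.1 p.2)) (x p.2)).2) (Finset.mem_univ (i,j)))
        simp only [hxi, hxj, pmul_zero_left, le_refl]
      · apply Finset.sup_le
        rintro ⟨k, l⟩ -
        simp only []
        by_cases hk : k = i
        · by_cases hl : l = i
          · rw [hk, hl, hxi, pmul_zero_left, pmul_zero_right]
            exact le_max_left _ _
          · by_cases hl' : l = j
            · rw [hk, hl', hxi, hxj, pmul_zero_left]
              exact le_trans (le_max_left _ _) (le_max_right _ _)
            · have hxl : x l = pzero := by simp [hx, hl, hl']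
              rw [hxl, pmul_pzero_right]
              exact bot_le
        · by_cases hk' : k = j
          · by_cases hl : l = i
            · rw [hk', hl, hxj, hxi, pmul_zero_right, hsym j i]
              exact le_trans (le_trans (le_max_left _ _) (le_max_right _ _)) (le_max_right _ _)
            · by_cases hl' : l = j
              · rw [hk', hl', hxj]
                exact le_trans (le_trans (le_max_right _ _) (le_max_right _ _)) (le_max_right _ _)
              · have hxl : x l = pzero := by simp [hx, hl, hl']
                rw [hxl, pmul_pzero_right]
                exact bot_le
          · have hxk : x k = pzero := by simp [hx, hk, hk']
            rw [hxk, pmul_pzero_left, pmul_pzero_left]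
            exact bot_le
    rcases hsigned i j with h1 | h2
    · -- A i j = (⊥, s)
      have key : (A i j).2 + (A i j).2 ≤ (A i i).1 + (A j j).1 := by
        apply key_forward
        intro t
        have h := Hkey ((t:Trop), ⊥) (Or.inr rfl)
        simp only [pmul, h1, haa j, WithBot.bot_add, WithBot.add_bot, maxbotl, maxbotr] at h
        exact le_trans h (max_le_max le_rfl (le_of_eq (add_right_comm _ _ _)))
      simp only [ple, pmul, h1, haa i, haa j, WithBot.bot_add, WithBot.add_bot,
        maxbotl, maxbotr]
      exact key
    · -- A i j = (s, ⊥)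
      have key : (A i j).1 + (A i j).1 ≤ (A i i).1 + (A j j).1 := by
        apply key_forward
        intro t
        have h := Hkey (⊥, (t:Trop)) (Or.inl rfl)
        simp only [pmul, h2, haa j, WithBot.bot_add, WithBot.add_bot, maxbotl, maxbotr] at h
        exact le_trans h (max_le_max le_rfl (le_of_eq (add_right_comm _ _ _)))
      simp only [ple, pmul, h2, haa i, haa j, WithBot.bot_add, WithBot.add_bot,
        maxbotl, maxbotr]
      exact key
  · rintro ⟨ha, hb⟩ x hx
    have haa : ∀ i, (A i i).2 = ⊥ := by
      intro i
      have h := ha i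
      simp only [ple, pzero, maxbotl] at h
      rcases hsigned i i with h1 | h2
      · exact le_bot_iff.mp (h1 ▸ h)
      · exact h2
    have hsq : ∀ i j, max (A i j).1 (A i j).2 + max (A i j).1 (A i j).2
        ≤ (A i i).1 + (A j j).1 := by
      intro i j
      by_cases hij : i = j
      · subst hij
        simp [haa i, maxbotr]
      · have h := hb i j hij
        simp only [ple, pmul, haa i, haa j, WithBot.bot_add, WithBot.add_bot,
          maxbotl, maxbotr] at h
        rcases hsigned i j with h1 | h2
        · simpa [h1, maxbotl, WithBot.bot_add, maxbotr] using h
        · simpa [h2, maxbotl, WithBot.add_bot, maxbotr] using h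
    simp only [ple, pzero, quadForm, maxbotl]
    have hdiag : ∀ k, (max (x k).1 (x k).2) + (A k k).1 + (max (x k).1 (x k).2) ≤
        Finset.univ.sup fun p : Fin n × Fin n =>
          (pmul (pmul (x p.1) (A p.1 p.2)) (x p.2)).1 := by
      intro k
      refine le_trans ?_ (Finset.le_sup (f := fun p : Fin n × Fin n =>
        (pmul (pmul (x p.1) (A p.1 p.2)) (x p.2)).1) (Finset.mem_univ (k,k)))
      simp only [pmul, haa k, WithBot.add_bot, WithBot.bot_add, maxbotr, maxbotl]
      rcases max_cases (x k).1 (x k).2 with ⟨he, _⟩ | ⟨he, _⟩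
      · rw [he]; exact le_max_left _ _
      · rw [he]; exact le_max_right _ _
    apply Finset.sup_le
    rintro ⟨i, j⟩ -
    simp only []
    have h1 : (pmul (pmul (x i) (A i j)) (x j)).2 ≤
        (max (x i).1 (x i).2) + (max (A i j).1 (A i j).2) + (max (x j).1 (x j).2) := by
      refine le_trans (le_max_right _ _) (le_trans (pmul_mag_le _ _) ?_)
      exact add_le_add (pmul_mag_le _ _) le_rfl
    refine le_trans h1 (le_trans (le_max_of_double ?_) (max_le (hdiag i) (hdiag j)))
    have e1 : ((max (x i).1 (x i).2) + (max (A i j).1 (A i j).2) + (max (x j).1 (x j).2))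
        + ((max (x i).1 (x i).2) + (max (A i j).1 (A i j).2) + (max (x j).1 (x j).2))
        = (max (A i j).1 (A i j).2 + max (A i j).1 (A i j).2)
          + ((max (x i).1 (x i).2) + (max (x i).1 (x i).2)
            + ((max (x j).1 (x j).2) + (max (x j).1 (x j).2))) := by abel
    have e2 : ((max (x i).1 (x i).2) + (A i i).1 + (max (x i).1 (x i).2))
        + ((max (x j).1 (x j).2) + (A j j).1 + (max (x j).1 (x j).2))
        = ((A i i).1 + (A j j).1)
          + ((max (x i).1 (x i).2) + (max (x i).1 (x i).2)
            + ((max (x j).1 (x j).2) + (max (x j).1 (x j).2))) := by abel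
    rw [e1, e2]
    exact add_le_add (hsq i j) le_rfl
end

section
/- Let Y, Z ∈ 𝕋^{n×n} be tropical positive semidefinite matrices. Then the tropical Frobenius scalar products satisfy ⟨Y, Z⟩ = ⟨diag(Y), diag(Z)⟩, i.e., max_{i,j} (Y_ij + Z_ij) = max_i (Y_ii + Z_ii). -/
/-- A matrix Y ∈ 𝕋^{k×k} is tropical positive semidefinite if it is symmetric and
2·Y_lm ≤ Y_ll + Y_mm for all l, m. -/
def TropPSD {k : ℕ} (Y : Fin k → Fin k → Trop) : Prop :=
  (∀ l m, Y l m = Y m l) ∧ ∀ l m, Y l m + Y l m ≤ Y l l + Y m m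


lemma key_half (a b c : Trop) (h : a + a ≤ b + c) : a ≤ max b c := by
  induction a using WithBot.recBotCoe with
  | bot => simp
  | coe x =>
    induction b using WithBot.recBotCoe with
    | bot => simp [WithBot.bot_add] at h
    | coe y =>
      induction c using WithBot.recBotCoe with
      | bot => simp [WithBot.add_bot] at h
      | coe z =>
        have : (x : ℝ) + x ≤ y + z := by exact_mod_cast h
        have : (x : ℝ) ≤ max y z := by
          rcases le_total y z with h'|h' <;> [skip; rw [max_comm]] <;>
            simp [max_eq_right, max_eq_left, h'] <;> linarith
        calc (x : Trop) ≤ ((max y z : ℝ) : Trop) := WithBot.coe_le_coe.mpr this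
          _ = max (y : Trop) (z : Trop) := WithBot.coe_max y z

/-- For tropical positive semidefinite matrices Y, Z, the tropical Frobenius scalar
product satisfies ⟨Y,Z⟩ = ⟨diag Y, diag Z⟩: max_{i,j} (Y_ij + Z_ij) = max_i (Y_ii + Z_ii). -/
theorem tropPSD_frobenius_diag {n : ℕ} (Y Z : Fin n → Fin n → Trop)
    (hY : TropPSD Y) (hZ : TropPSD Z) :
    (Finset.univ.sup fun p : Fin n × Fin n => Y p.1 p.2 + Z p.1 p.2) =
      Finset.univ.sup fun i => Y i i + Z i i := by
  apply le_antisymm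
  · apply Finset.sup_le
    intro p _
    obtain ⟨i, j⟩ := p
    have h1 := hY.2 i j
    have h2 := hZ.2 i j
    have hsum : (Y i j + Z i j) + (Y i j + Z i j) ≤ (Y i i + Z i i) + (Y j j + Z j j) := by
      calc (Y i j + Z i j) + (Y i j + Z i j) = (Y i j + Y i j) + (Z i j + Z i j) := add_add_add_comm _ _ _ _
        _ ≤ (Y i i + Y j j) + (Z i i + Z j j) := add_le_add h1 h2
        _ = (Y i i + Z i i) + (Y j j + Z j j) := add_add_add_comm _ _ _ _
    have hk := key_half _ _ _ hsum
    refine hk.trans (max_le ?_ ?_)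
    · exact Finset.le_sup (f := fun i => Y i i + Z i i) (Finset.mem_univ i)
    · exact Finset.le_sup (f := fun i => Y i i + Z i i) (Finset.mem_univ j)
  · apply Finset.sup_le
    intro i _
    exact Finset.le_sup (f := fun p : Fin n × Fin n => Y p.1 p.2 + Z p.1 p.2) (Finset.mem_univ (i, i))
end

section
/- For all n, k ≥ 1 and every X ∈ 𝕋^{n×n}: X is tropical completely positive semidefinite of order k if and only if X is tropical completely positive of order k. -/
/-- X ∈ 𝕋^{n×n} is tropical completely positive of order k if X_ij = ⟨y^i, y^j⟩
for some vectors y¹, …, yⁿ ∈ 𝕋ᵏ. -/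
def TropCP (n k : ℕ) (X : Fin n → Fin n → Trop) : Prop :=
  ∃ y : Fin n → Fin k → Trop,
    ∀ i j, X i j = Finset.univ.sup fun l => y i l + y j l

/-- X ∈ 𝕋^{n×n} is tropical completely positive semidefinite of order k if
X_ij = ⟨Y^i, Y^j⟩ (tropical Frobenius product) for some tropical positive
semidefinite matrices Y¹, …, Yⁿ ∈ 𝕋^{k×k}. -/
def TropCPSD (n k : ℕ) (X : Fin n → Fin n → Trop) : Prop :=
  ∃ Y : Fin n → Fin k → Fin k → Trop, (∀ i, TropPSD (Y i)) ∧
    ∀ i j, X i j = Finset.univ.sup fun p : Fin k × Fin k => Y i p.1 p.2 + Y j p.1 p.2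


lemma half_le_trop {a b : Trop} (h : a + a ≤ b + b) : a ≤ b := by
  induction a using WithBot.recBotCoe with
  | bot => exact bot_le
  | coe x =>
    induction b using WithBot.recBotCoe with
    | bot =>
      exfalso
      simp only [WithBot.add_bot] at h
      have : ((x + x : ℝ) : Trop) = ⊥ := by
        rw [WithBot.coe_add] at *; exact le_bot_iff.mp h
      exact WithBot.coe_ne_bot this
    | coe y =>
      have h' : (x : ℝ) + x ≤ y + y := by exact_mod_cast h
      exact_mod_cast (by linarith : x ≤ y)

/-- For all n, k ≥ 1, a matrix X ∈ 𝕋^{n×n} is tropical completely positive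
semidefinite of order k iff it is tropical completely positive of order k. -/
theorem tropCPSD_iff_tropCP {n k : ℕ} (hn : 1 ≤ n) (hk : 1 ≤ k)
    (X : Fin n → Fin n → Trop) : TropCPSD n k X ↔ TropCP n k X := by
  constructor
  · rintro ⟨Y, hPSD, hX⟩
    refine ⟨fun i l => Y i l l, fun i j => ?_⟩
    rw [hX i j]
    apply le_antisymm
    · apply Finset.sup_le
      intro p _
      have h1 := (hPSD i).2 p.1 p.2
      have h2 := (hPSD j).2 p.1 p.2
      have key : (Y i p.1 p.2 + Y j p.1 p.2) + (Y i p.1 p.2 + Y j p.1 p.2) ≤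
          (Y i p.1 p.1 + Y j p.1 p.1) + (Y i p.2 p.2 + Y j p.2 p.2) := by
        calc (Y i p.1 p.2 + Y j p.1 p.2) + (Y i p.1 p.2 + Y j p.1 p.2)
            = (Y i p.1 p.2 + Y i p.1 p.2) + (Y j p.1 p.2 + Y j p.1 p.2) := by
              rw [add_add_add_comm]
          _ ≤ (Y i p.1 p.1 + Y i p.2 p.2) + (Y j p.1 p.1 + Y j p.2 p.2) := add_le_add h1 h2
          _ = (Y i p.1 p.1 + Y j p.1 p.1) + (Y i p.2 p.2 + Y j p.2 p.2) := by
              rw [add_add_add_comm]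
      have key2 : Y i p.1 p.2 + Y j p.1 p.2 ≤
          max (Y i p.1 p.1 + Y j p.1 p.1) (Y i p.2 p.2 + Y j p.2 p.2) := by
        apply half_le_trop
        exact key.trans (add_le_add (le_max_left _ _) (le_max_right _ _))
      refine key2.trans (max_le ?_ ?_)
      · exact Finset.le_sup (f := fun l => Y i l l + Y j l l) (Finset.mem_univ _)
      · exact Finset.le_sup (f := fun l => Y i l l + Y j l l) (Finset.mem_univ p.2)
    · apply Finset.sup_le
      intro l _
      exact Finset.le_sup (f := fun p : Fin k × Fin k => Y i p.1 p.2 + Y j p.1 p.2)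
        (Finset.mem_univ (l, l))
  · rintro ⟨y, hX⟩
    refine ⟨fun i l m => if l = m then y i l else ⊥, fun i => ⟨?_, ?_⟩, ?_⟩
    · intro l m
      by_cases h : l = m
      · subst h; rfl
      · simp [h, Ne.symm h]
    · intro l m
      by_cases h : l = m
      · subst h; simp
      · simp [h]
    · intro i j
      rw [hX i j]
      apply le_antisymm
      · apply Finset.sup_le
        intro l _
        have := Finset.le_sup (f := fun p : Fin k × Fin k =>
          (if p.1 = p.2 then y i p.1 else ⊥) + (if p.1 = p.2 then y j p.1 else ⊥))
          (Finset.mem_univ (l, l))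
        simpa using this
      · apply Finset.sup_le
        intro p _
        by_cases h : p.1 = p.2
        · simp only [h, if_pos rfl]
          exact Finset.le_sup (f := fun l => y i l + y j l) (Finset.mem_univ _)
        · simp [h]
end
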